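/- arXiv:0807.1592 — 3 statements merged into one kernel-verified Lean document; each statement's English description precedes it below -/
import Mathlib

section
/- If γ : [0,1] → ℝ^k is a Lipschitz curve that is injective (simple), then equality |T^γ|(ℝ^k) = L_γ holds, and moreover the total variation measure |T^γ| equals the pushforward of the measure ‖γ'(s)‖ ds on [0,1] under γ. -/
open MeasureTheory Set

/-- For a simple (injective) Lipschitz curve `γ : [0,1] → ℝ^k`, the total
variation of the vector measure `T^γ` (expressed by duality) attains the length:
`|T^γ|(ℝ^k) = L_γ`, and on each Borel set `A` the total variation measure
`|T^γ|` coincides with the pushforward `γ_#(‖γ'(s)‖ ds)`. -/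
theorem curve_tv_eq_length_and_pushforward {k : ℕ}
    {γ : ℝ → EuclideanSpace ℝ (Fin k)} {K : NNReal}
    (hγ : LipschitzWith K γ) (hsimple : InjOn γ (Icc 0 1)) :
    IsLUB {r : ℝ | ∃ g : EuclideanSpace ℝ (Fin k) → EuclideanSpace ℝ (Fin k),
        Measurable g ∧ (∀ x, ‖g x‖ ≤ 1) ∧
        r = ∫ s in (0:ℝ)..1, (inner ℝ (g (γ s)) (deriv γ s) : ℝ)}
      (∫ s in (0:ℝ)..1, ‖deriv γ s‖) ∧
    ∀ A : Set (EuclideanSpace ℝ (Fin k)), MeasurableSet A →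
      sSup {r : ℝ | ∃ g : EuclideanSpace ℝ (Fin k) → EuclideanSpace ℝ (Fin k),
          Measurable g ∧ (∀ x, ‖g x‖ ≤ 1) ∧
          r = ∫ s in (0:ℝ)..1,
            A.indicator (fun _ => (1:ℝ)) (γ s) * (inner ℝ (g (γ s)) (deriv γ s) : ℝ)}
        = ((Measure.map γ
            ((volume.restrict (Icc (0:ℝ) 1)).withDensity
              (fun s => ENNReal.ofReal ‖deriv γ s‖))) A).toReal := by
  classical
  have hDmeas : Measurable (deriv γ) := measurable_deriv γ
  have hDbound : ∀ s, ‖deriv γ s‖ ≤ K := fun s => norm_deriv_le_of_lipschitz hγ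
  -- unit vector field along the curve
  set u0 : ℝ → EuclideanSpace ℝ (Fin k) :=
    fun s => if deriv γ s = 0 then 0 else ‖deriv γ s‖⁻¹ • deriv γ s with hu0
  have hu0meas : Measurable u0 := by
    apply Measurable.ite (hDmeas (measurableSet_singleton 0)) measurable_const
    exact (hDmeas.norm.inv).smul hDmeas
  have hu0norm : ∀ s, ‖u0 s‖ ≤ 1 := by
    intro s
    simp only [hu0]
    split_ifs with h
    · simp
    · rw [norm_smul, norm_inv, norm_norm, inv_mul_cancel₀ (norm_ne_zero_iff.2 h)]
  have hu0inner : ∀ s, (inner ℝ (u0 s) (deriv γ s) : ℝ) = ‖deriv γ s‖ := by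
    intro s
    simp only [hu0]
    split_ifs with h
    · simp [h]
    · rw [real_inner_smul_left, real_inner_self_eq_norm_mul_norm]
      have h0 : ‖deriv γ s‖ ≠ 0 := norm_ne_zero_iff.2 h
      field_simp
  -- measurable extension of the unit tangent field to the ambient space
  have me : MeasurableEmbedding ((Icc (0:ℝ) 1).restrict γ) :=
    (hγ.continuous.continuousOn).measurableEmbedding measurableSet_Icc hsimple
  obtain ⟨g', hg'meas, hg'ext⟩ :=
    me.exists_measurable_extend (hu0meas.comp measurable_subtype_coe) (fun _ => ⟨0⟩)
  set g : EuclideanSpace ℝ (Fin k) → EuclideanSpace ℝ (Fin k) :=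
    fun x => if ‖g' x‖ ≤ 1 then g' x else 0 with hg
  have hgmeas : Measurable g :=
    Measurable.ite (measurableSet_le hg'meas.norm measurable_const) hg'meas measurable_const
  have hgnorm : ∀ x, ‖g x‖ ≤ 1 := by
    intro x; simp only [hg]; split_ifs with h
    · exact h
    · simp
  have hgγ : ∀ s ∈ Icc (0:ℝ) 1, g (γ s) = u0 s := by
    intro s hs
    have h1 : g' (γ s) = u0 s := congrFun hg'ext ⟨s, hs⟩
    simp only [hg, h1, if_pos (hu0norm s)]
  have hkey : ∀ s ∈ Icc (0:ℝ) 1, (inner ℝ (g (γ s)) (deriv γ s) : ℝ) = ‖deriv γ s‖ := by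
    intro s hs; rw [hgγ s hs, hu0inner]
  -- integrability helper
  have hII : ∀ (f : ℝ → ℝ) (C : ℝ), Measurable f → (∀ s, |f s| ≤ C) →
      IntervalIntegrable f volume 0 1 := by
    intro f C hf hb
    exact (intervalIntegrable_const (c := C)).mono_fun' hf.aestronglyMeasurable
      (ae_of_all _ fun s => by simpa [Real.norm_eq_abs] using hb s)
  have hDnormII : IntervalIntegrable (fun s => ‖deriv γ s‖) volume 0 1 :=
    hII _ K hDmeas.norm (fun s => by
      rw [abs_of_nonneg (norm_nonneg _)]; exact hDbound s)
  have hinnerII : ∀ (h : EuclideanSpace ℝ (Fin k) → EuclideanSpace ℝ (Fin k)),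
      Measurable h → (∀ x, ‖h x‖ ≤ 1) →
      IntervalIntegrable (fun s => (inner ℝ (h (γ s)) (deriv γ s) : ℝ)) volume 0 1 := by
    intro h hm hb
    refine hII _ K ?_ ?_
    · exact (hm.comp hγ.continuous.measurable).inner hDmeas
    · intro s
      calc |(inner ℝ (h (γ s)) (deriv γ s) : ℝ)| ≤ ‖h (γ s)‖ * ‖deriv γ s‖ :=
            abs_real_inner_le_norm _ _
        _ ≤ 1 * (K : ℝ) := by
            exact mul_le_mul (hb _) (hDbound s) (norm_nonneg _) zero_le_one
        _ = (K : ℝ) := one_mul _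
  have hinner_le : ∀ (h : EuclideanSpace ℝ (Fin k) → EuclideanSpace ℝ (Fin k)),
      (∀ x, ‖h x‖ ≤ 1) → ∀ s, (inner ℝ (h (γ s)) (deriv γ s) : ℝ) ≤ ‖deriv γ s‖ := by
    intro h hb s
    calc (inner ℝ (h (γ s)) (deriv γ s) : ℝ) ≤ ‖h (γ s)‖ * ‖deriv γ s‖ :=
          real_inner_le_norm _ _
      _ ≤ 1 * ‖deriv γ s‖ := mul_le_mul_of_nonneg_right (hb _) (norm_nonneg _)
      _ = ‖deriv γ s‖ := one_mul _
  constructor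
  · -- first part: IsLUB
    constructor
    · -- upper bound
      rintro r ⟨h, hm, hb, rfl⟩
      exact intervalIntegral.integral_mono_on zero_le_one (hinnerII h hm hb) hDnormII
        (fun s hs => hinner_le h hb s)
    · -- least: the value is attained, hence any upper bound dominates it
      intro b hb
      refine hb ⟨g, hgmeas, hgnorm, ?_⟩
      refine (intervalIntegral.integral_congr ?_).symm
      intro s hs
      rw [uIcc_of_le zero_le_one] at hs
      exact hkey s hs
  · -- second part
    intro A hA
    have hγmeas : Measurable γ := hγ.continuous.measurable
    have hB : MeasurableSet (γ ⁻¹' A) := hA.preimage hγmeas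
    have hIndII : IntervalIntegrable
        (fun s => A.indicator (fun _ => (1:ℝ)) (γ s) * ‖deriv γ s‖) volume 0 1 := by
      refine hII _ K ?_ ?_
      · exact ((measurable_one.indicator hA).comp hγmeas).mul hDmeas.norm
      · intro s
        rw [abs_mul]
        calc |A.indicator (fun _ => (1:ℝ)) (γ s)| * |‖deriv γ s‖|
            ≤ 1 * (K : ℝ) := by
              refine mul_le_mul ?_ (by rw [abs_of_nonneg (norm_nonneg _)]; exact hDbound s)
                (abs_nonneg _) zero_le_one
              by_cases hmem : γ s ∈ A <;> simp [Set.indicator, hmem]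
          _ = (K : ℝ) := one_mul _
    have hind_nonneg : ∀ s, 0 ≤ A.indicator (fun _ => (1:ℝ)) (γ s) := by
      intro s; by_cases hmem : γ s ∈ A <;> simp [Set.indicator, hmem]
    have hGreatest : IsGreatest {r : ℝ | ∃ g : EuclideanSpace ℝ (Fin k) → EuclideanSpace ℝ (Fin k),
          Measurable g ∧ (∀ x, ‖g x‖ ≤ 1) ∧
          r = ∫ s in (0:ℝ)..1,
            A.indicator (fun _ => (1:ℝ)) (γ s) * (inner ℝ (g (γ s)) (deriv γ s) : ℝ)}
        (∫ s in (0:ℝ)..1, A.indicator (fun _ => (1:ℝ)) (γ s) * ‖deriv γ s‖) := by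
      constructor
      · refine ⟨g, hgmeas, hgnorm, ?_⟩
        refine (intervalIntegral.integral_congr ?_).symm
        intro s hs
        rw [uIcc_of_le zero_le_one] at hs
        dsimp only
        rw [hkey s hs]
      · rintro r ⟨h, hm, hb, rfl⟩
        refine intervalIntegral.integral_mono_on zero_le_one ?_ hIndII ?_
        · refine hII _ K ?_ ?_
          · exact ((measurable_one.indicator hA).comp hγmeas).mul
              ((hm.comp hγmeas).inner hDmeas)
          · intro s
            rw [abs_mul]
            calc |A.indicator (fun _ => (1:ℝ)) (γ s)| * |(inner ℝ (h (γ s)) (deriv γ s) : ℝ)|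
                ≤ 1 * (K : ℝ) := by
                  refine mul_le_mul ?_ ?_ (abs_nonneg _) zero_le_one
                  · by_cases hmem : γ s ∈ A <;> simp [Set.indicator, hmem]
                  · calc |(inner ℝ (h (γ s)) (deriv γ s) : ℝ)|
                        ≤ ‖h (γ s)‖ * ‖deriv γ s‖ := abs_real_inner_le_norm _ _
                      _ ≤ 1 * (K : ℝ) :=
                          mul_le_mul (hb _) (hDbound s) (norm_nonneg _) zero_le_one
                      _ = (K : ℝ) := one_mul _
              _ = (K : ℝ) := one_mul _
        · intro s hs
          exact mul_le_mul_of_nonneg_left (hinner_le h hb s) (hind_nonneg s)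
    rw [hGreatest.csSup_eq]
    -- now identify the integral with the pushforward measure
    have hindeq : ∀ s, A.indicator (fun _ => (1:ℝ)) (γ s) * ‖deriv γ s‖
        = (γ ⁻¹' A).indicator (fun s => ‖deriv γ s‖) s := by
      intro s
      by_cases hmem : γ s ∈ A <;> simp [Set.indicator, hmem]
    rw [Measure.map_apply hγmeas hA, withDensity_apply _ hB]
    have h1 : (∫ s in (0:ℝ)..1, A.indicator (fun _ => (1:ℝ)) (γ s) * ‖deriv γ s‖)
        = ∫ s in Icc (0:ℝ) 1, (γ ⁻¹' A).indicator (fun s => ‖deriv γ s‖) s := by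
      rw [intervalIntegral.integral_of_le zero_le_one, integral_Icc_eq_integral_Ioc]
      exact setIntegral_congr_fun measurableSet_Ioc (fun s _ => hindeq s)
    rw [h1, integral_indicator hB]
    rw [integral_eq_lintegral_of_nonneg_ae (ae_of_all _ fun s => norm_nonneg _)
      hDmeas.norm.aestronglyMeasurable]
end

section
/- Suppose V : (0,T) × ℝ^d → ℝ^d satisfies the Osgood condition |⟨V(t,x)−V(t,y), x−y⟩| ≤ C(t)‖x−y‖ρ(‖x−y‖) for all x,y and t. Then its Filippov regularization 𝕍 inherits the same bound: for every v ∈ 𝕍(t,x) and w ∈ 𝕍(t,y), |⟨v−w, x−y⟩| ≤ C(t)‖x−y‖ρ(‖x−y‖). -/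
open MeasureTheory Set

/-- The Filippov regularization of a vector field. -/
def filippovReg {n : ℕ} (V : ℝ → EuclideanSpace ℝ (Fin n) → EuclideanSpace ℝ (Fin n))
    (t : ℝ) (x : EuclideanSpace ℝ (Fin n)) : Set (EuclideanSpace ℝ (Fin n)) :=
  ⋂ r ∈ Ioi (0:ℝ), closure (convexHull ℝ (V t '' Metric.ball x r))


lemma halfspace_bound {n : ℕ} {S : Set (EuclideanSpace ℝ (Fin n))}
    {z : EuclideanSpace ℝ (Fin n)} {b : ℝ}
    (h : ∀ u ∈ S, (inner ℝ u z : ℝ) ≤ b) :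
    ∀ v ∈ closure (convexHull ℝ S), (inner ℝ v z : ℝ) ≤ b := by
  intro v hv
  have key : closure (convexHull ℝ S) ⊆ (innerSL ℝ z) ⁻¹' Iic b := by
    apply closure_minimal
    · apply convexHull_min
      · intro u hu
        rw [Set.mem_preimage, mem_Iic, innerSL_apply_apply, real_inner_comm]; exact h u hu
      · exact (convex_Iic b).linear_preimage (innerSL ℝ z).toLinearMap
    · exact (isClosed_Iic).preimage (innerSL ℝ z).continuous
  have hb := key hv
  rw [Set.mem_preimage, mem_Iic, innerSL_apply_apply, real_inner_comm] at hb; exact hb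

theorem filippovReg_osgood' {n : ℕ}
    {V : ℝ → EuclideanSpace ℝ (Fin n) → EuclideanSpace ℝ (Fin n)}
    {ρ C : ℝ → ℝ} {t : ℝ}
    (hρc : ContinuousOn ρ (Ico 0 1)) (hρm : MonotoneOn ρ (Ico 0 1))
    (hρ0 : ρ 0 = 0) (hρnn : ∀ s, 0 ≤ ρ s) (hCnn : 0 ≤ C t)
    (hbound : ∃ M : ℝ, ∀ z, ‖V t z‖ ≤ M)
    (hO : ∀ x y, ‖x - y‖ < 1 →
      |(inner ℝ (V t x - V t y) (x - y) : ℝ)| ≤ C t * ‖x - y‖ * ρ ‖x - y‖) :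
    ∀ x y, ‖x - y‖ < 1 →
      ∀ v ∈ (⋂ r ∈ Ioi (0:ℝ), closure (convexHull ℝ (V t '' Metric.ball x r))),
      ∀ w ∈ (⋂ r ∈ Ioi (0:ℝ), closure (convexHull ℝ (V t '' Metric.ball y r))),
        |(inner ℝ (v - w) (x - y) : ℝ)| ≤ C t * ‖x - y‖ * ρ ‖x - y‖ := by
  obtain ⟨M, hM⟩ := hbound
  intro x y hxy v hv w hw
  set D := ‖x - y‖ with hD
  have hD0 : 0 ≤ D := norm_nonneg _
  have hM0 : 0 ≤ M := le_trans (norm_nonneg _) (hM x)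
  -- continuity of g s = C t * s * ρ s at D within Ico 0 1
  set g : ℝ → ℝ := fun s => C t * s * ρ s with hg
  have hgc : ContinuousOn g (Ico 0 1) :=
    ((continuous_const.mul continuous_id).continuousOn).mul hρc
  apply le_of_forall_pos_le_add
  intro ε hε
  have hgD := hgc D ⟨hD0, hxy⟩
  rw [Metric.continuousWithinAt_iff] at hgD
  obtain ⟨δ, hδ0, hδ⟩ := hgD (ε / 2) (by linarith)
  -- choose r
  set r : ℝ := min (min (ε / (8 * (M + 1))) (δ / 4)) ((1 - D) / 4) with hr
  have hr0 : 0 < r :=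
    lt_min (lt_min (by positivity) (by linarith)) (by linarith)
  have hr1 : r ≤ ε / (8 * (M + 1)) := le_trans (min_le_left _ _) (min_le_left _ _)
  have hr2 : r ≤ δ / 4 := le_trans (min_le_left _ _) (min_le_right _ _)
  have hr3 : r ≤ (1 - D) / 4 := min_le_right _ _
  -- pairwise bound
  have pair : ∀ x' ∈ Metric.ball x r, ∀ y' ∈ Metric.ball y r,
      |(inner ℝ (V t x' - V t y') (x - y) : ℝ)| ≤ g D + ε := by
    intro x' hx' y' hy'
    rw [Metric.mem_ball, dist_eq_norm] at hx' hy'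
    have hdiff : ‖(x - y) - (x' - y')‖ ≤ 2 * r := by
      have : (x - y) - (x' - y') = (x - x') - (y - y') := by abel
      rw [this]
      calc ‖(x - x') - (y - y')‖ ≤ ‖x - x'‖ + ‖y - y'‖ := norm_sub_le _ _
        _ ≤ 2 * r := by
          have h1 : ‖x - x'‖ < r := by rwa [norm_sub_rev]
          have h2 : ‖y - y'‖ < r := by rwa [norm_sub_rev]
          linarith
    have hclose : |‖x' - y'‖ - D| ≤ 2 * r := by
      rw [abs_sub_le_iff]
      constructor
      · have := norm_sub_norm_le (x' - y') (x - y)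
        have h2 : ‖(x' - y') - (x - y)‖ ≤ 2 * r := by rwa [norm_sub_rev] at hdiff
        linarith
      · have := norm_sub_norm_le (x - y) (x' - y')
        linarith
    have hlt1 : ‖x' - y'‖ < 1 := by
      have := abs_le.mp hclose
      linarith [this.2]
    have hnn' : (0:ℝ) ≤ ‖x' - y'‖ := norm_nonneg _
    have hgclose : g ‖x' - y'‖ ≤ g D + ε / 2 := by
      have hmem : ‖x' - y'‖ ∈ Ico (0:ℝ) 1 := ⟨hnn', hlt1⟩
      have hdist : dist ‖x' - y'‖ D < δ := by
        have h1 := abs_le.mp hclose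
        rw [Real.dist_eq, abs_sub_lt_iff]
        constructor <;> linarith [h1.1, h1.2]
      have h2 := hδ hmem hdist
      rw [Real.dist_eq] at h2
      have h3 := (abs_le.mp h2.le).2
      linarith
    have hVb : ‖V t x' - V t y'‖ ≤ 2 * M :=
      le_trans (norm_sub_le _ _) (by linarith [hM x', hM y'])
    have key : (inner ℝ (V t x' - V t y') (x - y) : ℝ)
        = (inner ℝ (V t x' - V t y') (x' - y') : ℝ)
          + (inner ℝ (V t x' - V t y') ((x - y) - (x' - y')) : ℝ) := by
      rw [← inner_add_right]
      congr 1
      abel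
    rw [key]
    calc |(inner ℝ (V t x' - V t y') (x' - y') : ℝ)
          + (inner ℝ (V t x' - V t y') ((x - y) - (x' - y')) : ℝ)|
        ≤ |(inner ℝ (V t x' - V t y') (x' - y') : ℝ)|
          + |(inner ℝ (V t x' - V t y') ((x - y) - (x' - y')) : ℝ)| := abs_add_le _ _
      _ ≤ C t * ‖x' - y'‖ * ρ ‖x' - y'‖ + ‖V t x' - V t y'‖ * ‖(x - y) - (x' - y')‖ := by
          gcongr
          · exact hO x' y' hlt1
          · exact abs_real_inner_le_norm _ _
      _ ≤ (g D + ε / 2) + (2 * M) * (2 * r) := by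
          have h4 : ‖V t x' - V t y'‖ * ‖(x - y) - (x' - y')‖ ≤ (2 * M) * (2 * r) :=
            mul_le_mul hVb hdiff (norm_nonneg _) (by positivity)
          exact add_le_add hgclose h4
      _ ≤ g D + ε := by
          have : (2 * M) * (2 * r) ≤ ε / 2 := by
            have : r * (8 * (M + 1)) ≤ ε := by
              rw [← le_div_iff₀ (by positivity)]
              exact hr1
            nlinarith
          linarith
  -- extract the two closures
  have hvr : v ∈ closure (convexHull ℝ (V t '' Metric.ball x r)) := by
    have := mem_iInter.mp hv r
    exact mem_iInter.mp this hr0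
  have hwr : w ∈ closure (convexHull ℝ (V t '' Metric.ball y r)) := by
    have := mem_iInter.mp hw r
    exact mem_iInter.mp this hr0
  set K := g D + ε with hK
  -- step 1: for all x' in ball x r, inner (V t x') (x-y) ≤ K + inner w (x-y)
  have step1 : ∀ u ∈ V t '' Metric.ball x r, (inner ℝ u (x - y) : ℝ) ≤ K + (inner ℝ w (x - y) : ℝ) := by
    rintro u ⟨x', hx', rfl⟩
    have haux : ∀ u ∈ V t '' Metric.ball y r,
        (inner ℝ u (-(x - y)) : ℝ) ≤ K - (inner ℝ (V t x') (x - y) : ℝ) := by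
      rintro u ⟨y', hy', rfl⟩
      have := (abs_le.mp (pair x' hx' y' hy')).2
      rw [inner_sub_left] at this
      rw [inner_neg_right]
      linarith
    have := halfspace_bound haux w hwr
    rw [inner_neg_right] at this
    linarith
  have hvle : (inner ℝ v (x - y) : ℝ) ≤ K + (inner ℝ w (x - y) : ℝ) :=
    halfspace_bound step1 v hvr
  -- step 2: symmetric
  have step2 : ∀ u ∈ V t '' Metric.ball y r, (inner ℝ u (x - y) : ℝ) ≤ K + (inner ℝ v (x - y) : ℝ) := by
    rintro u ⟨y', hy', rfl⟩
    have haux : ∀ u ∈ V t '' Metric.ball x r,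
        (inner ℝ u (-(x - y)) : ℝ) ≤ K - (inner ℝ (V t y') (x - y) : ℝ) := by
      rintro u ⟨x', hx', rfl⟩
      have := (abs_le.mp (pair x' hx' y' hy')).1
      rw [inner_sub_left] at this
      rw [inner_neg_right]
      linarith
    have := halfspace_bound haux v hvr
    rw [inner_neg_right] at this
    linarith
  have hwle : (inner ℝ w (x - y) : ℝ) ≤ K + (inner ℝ v (x - y) : ℝ) :=
    halfspace_bound step2 w hwr
  rw [inner_sub_left, abs_le]
  constructor <;> [skip; skip] <;> simp only [hK] at hvle hwle <;> linarith

/-- The Filippov regularization inherits the two-sided Osgood bound (O): for all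
`v ∈ 𝕍(t,x)` and `w ∈ 𝕍(t,y)`, `|⟨v - w, x - y⟩| ≤ C(t) ‖x-y‖ ρ(‖x-y‖)`
(with the modulus `ρ` extended by `∞` on `[1,∞)`, i.e. for `‖x-y‖ < 1`). -/
theorem filippovReg_osgood {n : ℕ}
    {V : ℝ → EuclideanSpace ℝ (Fin n) → EuclideanSpace ℝ (Fin n)}
    {ρ C : ℝ → ℝ} {t : ℝ}
    (hρc : ContinuousOn ρ (Ico 0 1)) (hρm : MonotoneOn ρ (Ico 0 1))
    (hρ0 : ρ 0 = 0) (hρnn : ∀ s, 0 ≤ ρ s) (hCnn : 0 ≤ C t)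
    (hbound : ∃ M : ℝ, ∀ z, ‖V t z‖ ≤ M)
    (hO : ∀ x y, ‖x - y‖ < 1 →
      |(inner ℝ (V t x - V t y) (x - y) : ℝ)| ≤ C t * ‖x - y‖ * ρ ‖x - y‖) :
    ∀ x y, ‖x - y‖ < 1 →
      ∀ v ∈ filippovReg V t x, ∀ w ∈ filippovReg V t y,
        |(inner ℝ (v - w) (x - y) : ℝ)| ≤ C t * ‖x - y‖ * ρ ‖x - y‖ := by
  exact filippovReg_osgood' hρc hρm hρ0 hρnn hCnn hbound hO
end

section
/- Let V satisfy (O) and (B), with flow X. Then for each s, t ∈ [0,T], the map x ↦ X(s,t,x) is a homeomorphism of ℝ^d, with inverse x ↦ X(t,s,x). -/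
open MeasureTheory Set

/-- An Osgood modulus of continuity. -/
def OsgoodModulus (ρ : ℝ → ℝ) : Prop :=
  ContinuousOn ρ (Ico 0 1) ∧ MonotoneOn ρ (Ico 0 1) ∧ ρ 0 = 0 ∧ (∀ s, 0 ≤ ρ s) ∧
    ∫⁻ s in Ioo (0:ℝ) 1, ENNReal.ofReal (1 / ρ s) = ⊤

/-- The two-sided Osgood condition (O) on the velocity field
(required when `‖x - y‖ < 1`, since `ρ = ∞` on `[1,∞)`). -/
def OsgoodCond {n : ℕ} (V : ℝ → EuclideanSpace ℝ (Fin n) → EuclideanSpace ℝ (Fin n))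
    (C ρ : ℝ → ℝ) (T : ℝ) : Prop :=
  ∀ t ∈ Ioo (0:ℝ) T, ∀ x y, ‖x - y‖ < 1 →
    |(inner ℝ (V t x - V t y) (x - y) : ℝ)| ≤ C t * ‖x - y‖ * ρ ‖x - y‖

/-- The uniform bound (B): `‖V(t,x)‖ ≤ D(t)` with `D ∈ L¹(0,T)`. -/
def BoundCond {n : ℕ} (V : ℝ → EuclideanSpace ℝ (Fin n) → EuclideanSpace ℝ (Fin n))
    (D : ℝ → ℝ) (T : ℝ) : Prop :=
  IntegrableOn D (Ioo 0 T) ∧ ∀ t ∈ Ioo (0:ℝ) T, ∀ x, ‖V t x‖ ≤ D t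

/-- `Y` is a generalized (Filippov) solution of the ODE on `[0,T]`. -/
def FilippovSol {n : ℕ} (V : ℝ → EuclideanSpace ℝ (Fin n) → EuclideanSpace ℝ (Fin n))
    (T : ℝ) (Y : ℝ → EuclideanSpace ℝ (Fin n)) : Prop :=
  ∃ g : ℝ → EuclideanSpace ℝ (Fin n), IntegrableOn g (Icc 0 T) ∧
    (∀ t ∈ Icc 0 T, Y t = Y 0 + ∫ u in (0:ℝ)..t, g u) ∧
    ∀ᵐ t ∂(volume.restrict (Ioo 0 T)), g t ∈ filippovReg V t (Y t)

/-- `X` is the (unique) Filippov flow of `V` on `[0,T]`: for each initial time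
`s` and point `x`, `t ↦ X s t x` is the unique Filippov solution with value `x`
at time `s`. -/
def IsFilippovFlow {n : ℕ} (V : ℝ → EuclideanSpace ℝ (Fin n) → EuclideanSpace ℝ (Fin n))
    (T : ℝ) (X : ℝ → ℝ → EuclideanSpace ℝ (Fin n) → EuclideanSpace ℝ (Fin n)) : Prop :=
  ∀ s ∈ Icc (0:ℝ) T, ∀ x, X s s x = x ∧ FilippovSol V T (fun t => X s t x) ∧
    ∀ Y, FilippovSol V T Y → Y s = x → ∀ t ∈ Icc (0:ℝ) T, Y t = X s t x

section Aux
variable {n : ℕ}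
local notation "E" => EuclideanSpace ℝ (Fin n)

/-- Bound on selections of the Filippov regularization. -/
lemma filippovReg_norm_le {V : ℝ → E → E} {D : ℝ → ℝ} {T : ℝ}
    (hB : BoundCond V D T) {v : ℝ} (hv : v ∈ Ioo (0:ℝ) T) (z g : E)
    (hg : g ∈ filippovReg V v z) : ‖g‖ ≤ D v := by
  have h1 : g ∈ closure (convexHull ℝ (V v '' Metric.ball z 1)) := by
    have := Set.mem_iInter₂.1 hg 1 (by norm_num : (1:ℝ) ∈ Ioi 0)
    exact this
  have hsub : V v '' Metric.ball z 1 ⊆ Metric.closedBall (0:E) (D v) := by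
    rintro _ ⟨x, -, rfl⟩
    simpa [Metric.mem_closedBall, dist_eq_norm] using hB.2 v hv x
  have h2 : closure (convexHull ℝ (V v '' Metric.ball z 1)) ⊆ Metric.closedBall (0:E) (D v) :=
    closure_minimal (convexHull_min hsub (convex_closedBall _ _)) Metric.isClosed_closedBall
  simpa [Metric.mem_closedBall, dist_eq_norm] using h2 h1

end Aux
open Topology
section Pairing
variable {n : ℕ}
local notation "E" => EuclideanSpace ℝ (Fin n)

lemma inner_left_clm_aux (a : E) : IsLinearMap ℝ (fun z : E => (inner ℝ z a : ℝ)) :=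
  ⟨fun z w => inner_add_left z w a, fun c z => real_inner_smul_left z a c⟩

lemma pairing {V : ℝ → E → E} {ρ C D : ℝ → ℝ} {T : ℝ}
    (hρ : OsgoodModulus ρ) (hC0 : ∀ t, 0 ≤ C t)
    (hO : OsgoodCond V C ρ T) (hB : BoundCond V D T)
    {u : ℝ} (hu : u ∈ Ioo (0:ℝ) T) (p q g h : E) (hpq : ‖p - q‖ < 1)
    (hg : g ∈ filippovReg V u p) (hh : h ∈ filippovReg V u q) :
    |(inner ℝ (g - h) (p - q) : ℝ)| ≤ C u * (‖p - q‖ * ρ ‖p - q‖) := by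
  set a := p - q with ha
  set nn := ‖p - q‖ with hnn
  have hnn0 : 0 ≤ nn := norm_nonneg _
  have hDu : 0 ≤ D u := le_trans (norm_nonneg _) (hB.2 u hu p)
  -- the estimate for fixed r
  have key : ∀ r : ℝ, r ∈ Ioo (0:ℝ) ((1 - nn)/2) →
      |(inner ℝ (g - h) a : ℝ)| ≤ C u * ((nn + 2*r) * ρ (nn + 2*r)) + 2 * D u * (2*r) := by
    intro r hr
    set B := C u * ((nn + 2*r) * ρ (nn + 2*r)) + 2 * D u * (2*r) with hB'
    have hr0 : (0:ℝ) < r := hr.1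
    have hr1 : nn + 2*r < 1 := by nlinarith [hr.2]
    have hmemI : nn + 2*r ∈ Ico (0:ℝ) 1 := ⟨by linarith, hr1⟩
    -- pointwise bound
    have hVB : ∀ x' ∈ Metric.ball p r, ∀ y' ∈ Metric.ball q r,
        |(inner ℝ (V u x' - V u y') a : ℝ)| ≤ B := by
      intro x' hx' y' hy'
      have hx'' : ‖x' - p‖ < r := by
        rw [← dist_eq_norm]; exact Metric.mem_ball.1 hx'
      have hy'' : ‖y' - q‖ < r := by
        rw [← dist_eq_norm]; exact Metric.mem_ball.1 hy'
      have hd : ‖x' - y'‖ ≤ nn + 2*r := by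
        have : x' - y' = (x' - p) + (p - q) + (q - y') := by abel
        rw [this]
        have h1 := norm_add_le ((x' - p) + (p - q)) (q - y')
        have h2 := norm_add_le (x' - p) (p - q)
        have h3 : ‖q - y'‖ = ‖y' - q‖ := norm_sub_rev _ _
        rw [h3] at h1
        nlinarith
      have hd1 : ‖x' - y'‖ < 1 := lt_of_le_of_lt hd hr1
      have hOb := hO u hu x' y' hd1
      have hmono : ρ ‖x' - y'‖ ≤ ρ (nn + 2*r) :=
        hρ.2.1 ⟨norm_nonneg _, hd1⟩ hmemI hd
      have hfirst : |(inner ℝ (V u x' - V u y') (x' - y') : ℝ)| ≤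
          C u * ((nn + 2*r) * ρ (nn + 2*r)) := by
        calc |(inner ℝ (V u x' - V u y') (x' - y') : ℝ)| ≤ C u * ‖x' - y'‖ * ρ ‖x' - y'‖ := hOb
        _ ≤ C u * ((nn + 2*r) * ρ (nn + 2*r)) := by
            rw [mul_assoc]
            apply mul_le_mul_of_nonneg_left _ (hC0 u)
            exact mul_le_mul hd hmono (hρ.2.2.2.1 _) (by linarith)
      have hVx : ‖V u x' - V u y'‖ ≤ 2 * D u := by
        have := norm_sub_le (V u x') (V u y')
        have h1 := hB.2 u hu x'; have h2 := hB.2 u hu y'; linarith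
      have hcorr : ‖a - (x' - y')‖ ≤ 2*r := by
        have : a - (x' - y') = (p - x') + (y' - q) := by rw [ha]; abel
        rw [this]
        have h1 := norm_add_le (p - x') (y' - q)
        have h2 : ‖p - x'‖ = ‖x' - p‖ := norm_sub_rev _ _
        rw [h2] at h1; linarith
      have hsecond : |(inner ℝ (V u x' - V u y') (a - (x' - y')) : ℝ)| ≤ 2 * D u * (2*r) := by
        calc |(inner ℝ (V u x' - V u y') (a - (x' - y')) : ℝ)|
            ≤ ‖V u x' - V u y'‖ * ‖a - (x' - y')‖ := abs_real_inner_le_norm _ _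
        _ ≤ 2 * D u * (2*r) := by
            apply mul_le_mul hVx hcorr (norm_nonneg _) (by linarith)
      have hsplit : (inner ℝ (V u x' - V u y') a : ℝ) =
          inner ℝ (V u x' - V u y') (x' - y') + inner ℝ (V u x' - V u y') (a - (x' - y')) := by
        rw [← inner_add_right]; congr 1; abel
      rw [hsplit, hB']
      calc |(inner ℝ (V u x' - V u y') (x' - y') : ℝ) + inner ℝ (V u x' - V u y') (a - (x' - y'))|
          ≤ |(inner ℝ (V u x' - V u y') (x' - y') : ℝ)| +
            |(inner ℝ (V u x' - V u y') (a - (x' - y')) : ℝ)| := abs_add_le _ _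
      _ ≤ _ := add_le_add hfirst hsecond
    have hgr : g ∈ closure (convexHull ℝ (V u '' Metric.ball p r)) :=
      Set.mem_iInter₂.1 hg r hr0
    have hhr : h ∈ closure (convexHull ℝ (V u '' Metric.ball q r)) :=
      Set.mem_iInter₂.1 hh r hr0
    -- upper bound
    have hupper : (inner ℝ (g - h) a : ℝ) ≤ B := by
      have step1 : ∀ x' ∈ Metric.ball p r,
          (inner ℝ (V u x') a : ℝ) - B ≤ (inner ℝ h a : ℝ) := by
        intro x' hx'
        have hS : closure (convexHull ℝ (V u '' Metric.ball q r)) ⊆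
            {z : E | (inner ℝ (V u x') a : ℝ) - B ≤ (inner ℝ z a : ℝ)} := by
          apply closure_minimal (convexHull_min ?_ (convex_halfSpace_ge (inner_left_clm_aux a) _))
          · exact isClosed_le continuous_const ((continuous_id.inner continuous_const))
          · rintro _ ⟨y', hy', rfl⟩
            have := (abs_le.1 (hVB x' hx' y' hy')).2
            have hs : (inner ℝ (V u x' - V u y') a : ℝ) =
                inner ℝ (V u x') a - inner ℝ (V u y') a := inner_sub_left _ _ _
            simp only [mem_setOf_eq]; linarith [hs, this]
        exact hS hhr
      have hS2 : closure (convexHull ℝ (V u '' Metric.ball p r)) ⊆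
          {z : E | (inner ℝ z a : ℝ) ≤ B + (inner ℝ h a : ℝ)} := by
        apply closure_minimal (convexHull_min ?_ (convex_halfSpace_le (inner_left_clm_aux a) _))
        · exact isClosed_le (continuous_id.inner continuous_const) continuous_const
        · rintro _ ⟨x', hx', rfl⟩
          have := step1 x' hx'
          simp only [mem_setOf_eq]; linarith
      have := hS2 hgr
      simp only [mem_setOf_eq] at this
      have hs : (inner ℝ (g - h) a : ℝ) = inner ℝ g a - inner ℝ h a := inner_sub_left _ _ _
      linarith [hs, this]
    -- lower bound
    have hlower : -B ≤ (inner ℝ (g - h) a : ℝ) := by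
      have step1 : ∀ x' ∈ Metric.ball p r,
          (inner ℝ h a : ℝ) ≤ (inner ℝ (V u x') a : ℝ) + B := by
        intro x' hx'
        have hS : closure (convexHull ℝ (V u '' Metric.ball q r)) ⊆
            {z : E | (inner ℝ z a : ℝ) ≤ (inner ℝ (V u x') a : ℝ) + B} := by
          apply closure_minimal (convexHull_min ?_ (convex_halfSpace_le (inner_left_clm_aux a) _))
          · exact isClosed_le (continuous_id.inner continuous_const) continuous_const
          · rintro _ ⟨y', hy', rfl⟩
            have := (abs_le.1 (hVB x' hx' y' hy')).1
            have hs : (inner ℝ (V u x' - V u y') a : ℝ) =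
                inner ℝ (V u x') a - inner ℝ (V u y') a := inner_sub_left _ _ _
            simp only [mem_setOf_eq]; linarith [hs, this]
        exact hS hhr
      have hS2 : closure (convexHull ℝ (V u '' Metric.ball p r)) ⊆
          {z : E | (inner ℝ h a : ℝ) - B ≤ (inner ℝ z a : ℝ)} := by
        apply closure_minimal (convexHull_min ?_ (convex_halfSpace_ge (inner_left_clm_aux a) _))
        · exact isClosed_le continuous_const (continuous_id.inner continuous_const)
        · rintro _ ⟨x', hx', rfl⟩
          have := step1 x' hx'
          simp only [mem_setOf_eq]; linarith
      have := hS2 hgr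
      simp only [mem_setOf_eq] at this
      have hs : (inner ℝ (g - h) a : ℝ) = inner ℝ g a - inner ℝ h a := inner_sub_left _ _ _
      linarith [hs, this]
    rw [abs_le]; exact ⟨hlower, hupper⟩
  -- pass to the limit r → 0⁺
  have hhalf : (0:ℝ) < (1 - nn)/2 := by linarith
  have hmem : Ioo (0:ℝ) ((1 - nn)/2) ∈ nhdsWithin (0:ℝ) (Ioi 0) :=
    Ioo_mem_nhdsGT_of_mem ⟨le_refl 0, hhalf⟩
  have ht1 : Filter.Tendsto (fun r : ℝ => nn + 2*r) (nhdsWithin 0 (Ioi 0)) (𝓝 nn) := by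
    have : Filter.Tendsto (fun r : ℝ => nn + 2*r) (𝓝 0) (𝓝 (nn + 2*0)) := by
      exact (continuous_const.add (continuous_const.mul continuous_id)).tendsto 0
    simpa using this.mono_left nhdsWithin_le_nhds
  have ht1' : Filter.Tendsto (fun r : ℝ => nn + 2*r) (nhdsWithin 0 (Ioi 0))
      (nhdsWithin nn (Ico 0 1)) := by
    rw [tendsto_nhdsWithin_iff]
    refine ⟨ht1, ?_⟩
    filter_upwards [hmem] with r hr
    exact ⟨by linarith [hr.1.le], by nlinarith [hr.2]⟩
  have ht2 : Filter.Tendsto (fun r : ℝ => ρ (nn + 2*r)) (nhdsWithin 0 (Ioi 0)) (𝓝 (ρ nn)) :=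
    (hρ.1 nn ⟨hnn0, hpq⟩).tendsto.comp ht1'
  have htf : Filter.Tendsto (fun r : ℝ => C u * ((nn + 2*r) * ρ (nn + 2*r)) + 2 * D u * (2*r))
      (nhdsWithin 0 (Ioi 0)) (𝓝 (C u * (nn * ρ nn))) := by
    have h2r : Filter.Tendsto (fun r : ℝ => 2 * D u * (2*r)) (nhdsWithin 0 (Ioi 0)) (𝓝 0) := by
      have : Filter.Tendsto (fun r : ℝ => 2 * D u * (2*r)) (𝓝 0) (𝓝 (2 * D u * (2*0))) :=
        (continuous_const.mul (continuous_const.mul continuous_id)).tendsto 0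
      simpa using this.mono_left nhdsWithin_le_nhds
    have := (Filter.Tendsto.const_mul (C u) (ht1.mul ht2)).add h2r
    simpa using this
  exact ge_of_tendsto htf (Filter.eventually_of_mem hmem key)

end Pairing
section Identity
variable {n : ℕ}
local notation "E" => EuclideanSpace ℝ (Fin n)

lemma normsq_primitive {k : ℝ → E} {a u : ℝ} (hau : a ≤ u)
    (hk : IntegrableOn k (Icc a u)) :
    ‖∫ v in a..u, k v‖^2 = ∫ v in a..u, 2 * (inner ℝ (k v) (∫ w in a..v, k w) : ℝ) := by
  set μ := volume.restrict (Ioc a u) with hμ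
  have hkμ : Integrable k μ := hk.mono_set Ioc_subset_Icc_self
  set I : ℝ → E := fun v => ∫ w in a..v, k w with hI
  have hIv : ∀ v ∈ Icc a u, I v = ∫ w in Ioc a v, k w := fun v hv =>
    intervalIntegral.integral_of_le hv.1
  have hIcont : ContinuousOn I (Icc a u) := by
    have huI : uIcc a u = Icc a u := uIcc_of_le hau
    exact huI ▸ intervalIntegral.continuousOn_primitive_interval (huI ▸ hk)
  obtain ⟨K, hK⟩ : ∃ K, ∀ v ∈ Icc a u, ‖I v‖ ≤ K :=
    isCompact_Icc.exists_bound_of_continuousOn hIcont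
  have hIasm : AEStronglyMeasurable I μ :=
    (hIcont.mono Ioc_subset_Icc_self).aestronglyMeasurable measurableSet_Ioc
  have hIvint : Integrable (fun v => (inner ℝ (k v) (I v) : ℝ)) μ := by
    refine Integrable.mono' (hkμ.norm.mul_const K) (hkμ.aestronglyMeasurable.inner hIasm) ?_
    filter_upwards [ae_restrict_mem measurableSet_Ioc] with v hv
    calc ‖(inner ℝ (k v) (I v) : ℝ)‖ ≤ ‖k v‖ * ‖I v‖ := norm_inner_le_norm _ _
    _ ≤ ‖k v‖ * K := mul_le_mul_of_nonneg_left (hK v (Ioc_subset_Icc_self hv)) (norm_nonneg _)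
  set J := ∫ v, (inner ℝ (k v) (I v) : ℝ) ∂μ with hJ
  set H : ℝ × ℝ → ℝ :=
    Set.indicator {p : ℝ × ℝ | p.1 < p.2} (fun p => (inner ℝ (k p.1) (k p.2) : ℝ)) with hH
  have hmeas_lt : MeasurableSet {p : ℝ × ℝ | p.1 < p.2} :=
    measurableSet_lt measurable_fst measurable_snd
  have hGasm : AEStronglyMeasurable (fun p : ℝ × ℝ => (inner ℝ (k p.1) (k p.2) : ℝ)) (μ.prod μ) :=
    (hkμ.aestronglyMeasurable.comp_fst).inner (𝕜 := ℝ) (hkμ.aestronglyMeasurable.comp_snd)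
  have hGint : Integrable (fun p : ℝ × ℝ => (inner ℝ (k p.1) (k p.2) : ℝ)) (μ.prod μ) := by
    refine Integrable.mono' (hkμ.norm.mul_prod hkμ.norm) hGasm ?_
    refine Filter.Eventually.of_forall fun p => ?_
    exact norm_inner_le_norm _ _
  have hHint : Integrable H (μ.prod μ) := hGint.indicator hmeas_lt
  -- step (2): pointwise identity in v
  have step2 : ∀ v ∈ Ioc a u,
      (inner ℝ (k v) (I u) : ℝ) = inner ℝ (k v) (I v) + ∫ w, H (v, w) ∂μ := by
    intro v hv
    have e1 : ∫ w, H (v, w) ∂μ = ∫ w in Ioc v u, (inner ℝ (k v) (k w) : ℝ) := by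
      have heq : (fun w => H (v, w)) = (Ioi v).indicator fun w => (inner ℝ (k v) (k w) : ℝ) := by
        funext w
        by_cases hw : v < w <;> simp [hH, Set.indicator, mem_setOf_eq, Set.mem_Ioi, hw]
      rw [heq, integral_indicator measurableSet_Ioi, hμ,
        Measure.restrict_restrict measurableSet_Ioi]
      congr 2
      rw [inter_comm, Ioc_inter_Ioi, sup_eq_right.2 hv.1.le]
    have e2 : I u = I v + ∫ w in Ioc v u, k w := by
      have h1 : IntervalIntegrable k volume a v := by
        apply IntegrableOn.intervalIntegrable
        rw [uIcc_of_le hv.1.le]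
        exact hk.mono_set (Icc_subset_Icc le_rfl hv.2)
      have h2 : IntervalIntegrable k volume v u := by
        apply IntegrableOn.intervalIntegrable
        rw [uIcc_of_le hv.2]
        exact hk.mono_set (Icc_subset_Icc hv.1.le le_rfl)
      have := intervalIntegral.integral_add_adjacent_intervals h1 h2
      rw [hI]; simp only []
      rw [← this, ← intervalIntegral.integral_of_le hv.2]
    rw [e1, e2, inner_add_right]
    congr 1
    have hkvu : IntegrableOn k (Ioc v u) :=
      hk.mono_set fun w hw => ⟨hv.1.le.trans hw.1.le, hw.2⟩
    rw [← integral_inner hkvu (k v)]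
  -- step (4): pointwise identity in w
  have step4 : ∀ w ∈ Ioc a u, (∫ v, H (v, w) ∂μ) = (inner ℝ (k w) (I w) : ℝ) := by
    intro w hw
    have heq : (fun v => H (v, w)) = (Iio w).indicator fun v => (inner ℝ (k w) (k v) : ℝ) := by
      funext v
      by_cases hvw : v < w
      · simp only [hH, Set.indicator, mem_setOf_eq, Set.mem_Iio, hvw, if_true]
        exact real_inner_comm _ _
      · simp [hH, Set.indicator, mem_setOf_eq, Set.mem_Iio, hvw]
    rw [heq, integral_indicator measurableSet_Iio, hμ,
      Measure.restrict_restrict measurableSet_Iio]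
    have hset : Iio w ∩ Ioc a u = Ioo a w := by
      ext v; simp only [mem_inter_iff, Set.mem_Iio, Set.mem_Ioc, Set.mem_Ioo]
      constructor
      · rintro ⟨h1, h2, h3⟩; exact ⟨h2, h1⟩
      · rintro ⟨h1, h2⟩; exact ⟨h2, h1, (h2.le.trans hw.2)⟩
    rw [hset, ← integral_Ioc_eq_integral_Ioo]
    have hkaw : IntegrableOn k (Ioc a w) := hk.mono_set fun z hz => ⟨hz.1.le, hz.2.trans hw.2⟩
    rw [integral_inner hkaw (k w), ← hIv w ⟨hw.1.le, hw.2⟩]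
  -- step (1)+(5): assemble
  have step1 : ‖I u‖^2 = ∫ v, (inner ℝ (k v) (I u) : ℝ) ∂μ := by
    have : ∫ v, (inner ℝ (k v) (I u) : ℝ) ∂μ = ∫ v, (inner ℝ (I u) (k v) : ℝ) ∂μ := by
      congr 1; funext v; exact real_inner_comm _ _
    rw [this, integral_inner hkμ (I u), ← hIv u ⟨hau, le_rfl⟩, real_inner_self_eq_norm_sq]
  have hHv_int : Integrable (fun v => ∫ w, H (v, w) ∂μ) μ := hHint.integral_prod_left
  have split : ∫ v, (inner ℝ (k v) (I u) : ℝ) ∂μ = J + ∫ v, (∫ w, H (v, w) ∂μ) ∂μ := by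
    rw [← integral_add hIvint hHv_int]
    refine integral_congr_ae ?_
    filter_upwards [ae_restrict_mem measurableSet_Ioc] with v hv
    exact step2 v hv
  have swap : ∫ v, (∫ w, H (v, w) ∂μ) ∂μ = ∫ w, (∫ v, H (v, w) ∂μ) ∂μ :=
    integral_integral_swap hHint
  have last : ∫ w, (∫ v, H (v, w) ∂μ) ∂μ = J := by
    rw [hJ]
    refine integral_congr_ae ?_
    filter_upwards [ae_restrict_mem measurableSet_Ioc] with w hw
    exact step4 w hw
  have main : ‖I u‖^2 = 2 * J := by
    rw [step1, split, swap, last]; ring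
  have goal2 : (∫ v in a..u, 2 * (inner ℝ (k v) (I v) : ℝ)) = 2 * J := by
    rw [intervalIntegral.integral_of_le hau, hJ, ← MeasureTheory.integral_const_mul]
  show ‖I u‖^2 = ∫ v in a..u, 2 * (inner ℝ (k v) (I v) : ℝ)
  rw [main, goal2]

end Identity
section Identity2
variable {n : ℕ}
local notation "E" => EuclideanSpace ℝ (Fin n)

lemma sq_dist_identity {k : ℝ → E} {w u : ℝ} (hwu : w ≤ u)
    (hk : IntegrableOn k (Icc w u)) (e : E) :
    ‖e + ∫ v in w..u, k v‖^2
      = ‖e‖^2 + ∫ v in w..u, 2 * (inner ℝ (k v) (e + ∫ z in w..v, k z) : ℝ) := by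
  have huI : uIcc w u = Icc w u := uIcc_of_le hwu
  have hIcont : ContinuousOn (fun v => ∫ z in w..v, k z) (Icc w u) :=
    huI ▸ intervalIntegral.continuousOn_primitive_interval (huI ▸ hk)
  obtain ⟨K, hK⟩ : ∃ K, ∀ v ∈ Icc w u, ‖∫ z in w..v, k z‖ ≤ K :=
    isCompact_Icc.exists_bound_of_continuousOn hIcont
  have hkμ : Integrable k (volume.restrict (Icc w u)) := hk
  have hf1 : IntervalIntegrable (fun v => 2 * (inner ℝ e (k v) : ℝ)) volume w u := by
    apply IntegrableOn.intervalIntegrable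
    rw [huI]
    exact (hkμ.const_inner e).const_mul 2
  have hf2 : IntervalIntegrable (fun v => 2 * (inner ℝ (k v) (∫ z in w..v, k z) : ℝ)) volume w u := by
    apply IntegrableOn.intervalIntegrable
    rw [huI]
    have hIasm : AEStronglyMeasurable (fun v => ∫ z in w..v, k z)
        (volume.restrict (Icc w u)) := hIcont.aestronglyMeasurable measurableSet_Icc
    refine Integrable.const_mul ?_ 2
    refine Integrable.mono' (hkμ.norm.mul_const K) (hkμ.aestronglyMeasurable.inner hIasm) ?_
    filter_upwards [ae_restrict_mem measurableSet_Icc] with v hv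
    calc ‖(inner ℝ (k v) (∫ z in w..v, k z) : ℝ)‖ ≤ ‖k v‖ * ‖∫ z in w..v, k z‖ :=
      norm_inner_le_norm _ _
    _ ≤ ‖k v‖ * K := mul_le_mul_of_nonneg_left (hK v hv) (norm_nonneg _)
  have hkIoc : IntegrableOn k (Ioc w u) := hk.mono_set Ioc_subset_Icc_self
  have h2e : 2 * (inner ℝ e (∫ v in w..u, k v) : ℝ) = ∫ v in w..u, 2 * (inner ℝ e (k v) : ℝ) := by
    rw [intervalIntegral.integral_of_le hwu, intervalIntegral.integral_of_le hwu,
      ← integral_inner hkIoc e, ← MeasureTheory.integral_const_mul]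
  have hsq := normsq_primitive hwu hk
  rw [norm_add_sq_real, h2e, hsq, add_assoc, ← intervalIntegral.integral_add hf1 hf2]
  congr 1
  refine intervalIntegral.integral_congr fun v hv => ?_
  have h3 : (inner ℝ (k v) (e + ∫ z in w..v, k z) : ℝ)
      = inner ℝ (k v) e + inner ℝ (k v) (∫ z in w..v, k z) := inner_add_right _ _ _
  show 2 * (inner ℝ e (k v) : ℝ) + 2 * (inner ℝ (k v) (∫ z in w..v, k z) : ℝ)
      = 2 * (inner ℝ (k v) (e + ∫ z in w..v, k z) : ℝ)
  rw [h3, show (inner ℝ e (k v) : ℝ) = inner ℝ (k v) e from real_inner_comm _ _]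
  ring

end Identity2
section OsgoodSeq

/-- Construction of the scale sequence used in the Osgood argument. -/
lemma osgood_seq {ρ : ℝ → ℝ} (hρ : OsgoodModulus ρ) {ε : ℝ} (hε0 : 0 < ε) (hε1 : ε < 1)
    (hρε : 0 < ρ ε) (M : ℝ) :
    (∃ ε' : ℝ, 0 < ε' ∧ ε' ≤ ε ∧ ρ ε' = 0) ∨
    ∃ (N : ℕ) (r : ℕ → ℝ), r 0 = ε ∧ (∀ j, 0 < r j) ∧ (∀ j, r (j+1) < r j) ∧
      (∀ j, r j ≤ ε) ∧ (∀ j, 0 < ρ (r j)) ∧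
      M < ∑ j ∈ Finset.range N, (r j ^ 2 - r (j+1) ^ 2) / (2 * r j * ρ (r j)) := by
  obtain ⟨hcont, hmono, hzero, hnonneg, htop⟩ := hρ
  have hstep : ∀ x : ℝ, 0 < x → x ≤ ε → 0 < ρ x → ∃ y, 0 < y ∧ y < x ∧ ρ y = ρ x / 2 := by
    intro x hx0 hxε hρx
    have hx1 : x < 1 := lt_of_le_of_lt hxε hε1
    have hcx : ContinuousOn ρ (Icc 0 x) :=
      hcont.mono (fun z hz => ⟨hz.1, lt_of_le_of_lt hz.2 hx1⟩)
    have hIVT := intermediate_value_Icc (le_of_lt hx0) hcx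
    have hmem : ρ x / 2 ∈ Icc (ρ 0) (ρ x) := by
      rw [hzero]; constructor <;> linarith
    obtain ⟨y, hy, hρy⟩ := hIVT hmem
    refine ⟨y, ?_, ?_, hρy⟩
    · rcases eq_or_lt_of_le hy.1 with h | h
      · exfalso; rw [← h, hzero] at hρy; linarith
      · exact h
    · rcases eq_or_lt_of_le hy.2 with h | h
      · exfalso; rw [h] at hρy; linarith
      · exact h
  obtain ⟨f, hf⟩ : ∃ f : {x : ℝ // 0 < x ∧ x ≤ ε ∧ 0 < ρ x} → {x : ℝ // 0 < x ∧ x ≤ ε ∧ 0 < ρ x},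
      ∀ p, (f p).1 < p.1 ∧ ρ (f p).1 = ρ p.1 / 2 := by
    choose g h1 h2 h3 using hstep
    refine ⟨fun p => ⟨g p.1 p.2.1 p.2.2.1 p.2.2.2,
      h1 p.1 p.2.1 p.2.2.1 p.2.2.2,
      le_of_lt (lt_of_lt_of_le (h2 p.1 p.2.1 p.2.2.1 p.2.2.2) p.2.2.1),
      by rw [h3 p.1 p.2.1 p.2.2.1 p.2.2.2]; linarith [p.2.2.2]⟩,
      fun p => ⟨h2 _ _ _ _, h3 _ _ _ _⟩⟩
  set r' : ℕ → {x : ℝ // 0 < x ∧ x ≤ ε ∧ 0 < ρ x} :=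
    fun j => f^[j] ⟨ε, hε0, le_rfl, hρε⟩ with hr'
  set r : ℕ → ℝ := fun j => (r' j).1 with hrdef
  have hr0 : r 0 = ε := rfl
  have hrpos : ∀ j, 0 < r j := fun j => (r' j).2.1
  have hrε : ∀ j, r j ≤ ε := fun j => (r' j).2.2.1
  have hρrpos : ∀ j, 0 < ρ (r j) := fun j => (r' j).2.2.2
  have hsucc : ∀ j, r' (j+1) = f (r' j) := fun j => Function.iterate_succ_apply' f j _
  have hdec : ∀ j, r (j+1) < r j := fun j => by
    rw [hrdef]; simp only []; rw [hsucc j]; exact (hf (r' j)).1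
  have hhalf : ∀ j, ρ (r (j+1)) = ρ (r j) / 2 := fun j => by
    rw [hrdef]; simp only []; rw [hsucc j]; exact (hf (r' j)).2
  by_cases hL : ∃ ε' : ℝ, 0 < ε' ∧ ε' ≤ ε ∧ ρ ε' = 0
  · exact Or.inl hL
  push_neg at hL
  right
  have hanti : Antitone r := antitone_nat_of_succ_le fun j => (hdec j).le
  have hbdd : BddBelow (Set.range r) := ⟨0, by rintro _ ⟨j, rfl⟩; exact (hrpos j).le⟩
  set L : ℝ := ⨅ j, r j with hLdef
  have hLtend : Filter.Tendsto r Filter.atTop (nhds L) := tendsto_atTop_ciInf hanti hbdd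
  have hL0 : 0 ≤ L := le_ciInf fun j => (hrpos j).le
  have hLε : L ≤ ε := ciInf_le_of_le hbdd 0 (le_of_eq hr0)
  have hρL : ρ L = 0 := by
    have hmemL : L ∈ Ico (0:ℝ) 1 := ⟨hL0, lt_of_le_of_lt hLε hε1⟩
    have htend2 : Filter.Tendsto (fun j => ρ (r j)) Filter.atTop (nhds (ρ L)) := by
      refine (hcont L hmemL).tendsto.comp ?_
      rw [tendsto_nhdsWithin_iff]
      exact ⟨hLtend, Filter.Eventually.of_forall fun j =>
        ⟨(hrpos j).le, lt_of_le_of_lt (hrε j) hε1⟩⟩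
    have hval : ∀ j, ρ (r j) = ρ ε * (1/2)^j := by
      intro j; induction j with
      | zero => simp [hr0]
      | succ j ih => rw [hhalf j, ih]; ring
    have htend3 : Filter.Tendsto (fun j => ρ (r j)) Filter.atTop (nhds 0) := by
      simp_rw [hval]
      have := tendsto_pow_atTop_nhds_zero_of_lt_one (by norm_num : (0:ℝ) ≤ 1/2)
        (by norm_num : (1:ℝ)/2 < 1)
      simpa using this.const_mul (ρ ε)
    exact tendsto_nhds_unique htend2 htend3
  have hLzero : L = 0 := by
    rcases eq_or_lt_of_le hL0 with h | h
    · exact h.symm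
    · exact absurd hρL (hL L h hLε)
  -- covering of (0, ε)
  have hcover : Ioo (0:ℝ) ε ⊆ ⋃ j, Ico (r (j+1)) (r j) := by
    intro s hs
    have hex : ∃ j, r j ≤ s := by
      by_contra hc; push_neg at hc
      have h1 : s ≤ L := le_ciInf fun j => (hc j).le
      rw [hLzero] at h1; linarith [hs.1]
    classical
    have hj₀ : r (Nat.find hex) ≤ s := Nat.find_spec hex
    have hj₀pos : Nat.find hex ≠ 0 := by
      intro h; rw [h, hr0] at hj₀; linarith [hs.2]
    obtain ⟨i, hi⟩ := Nat.exists_eq_succ_of_ne_zero hj₀pos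
    have hlt : s < r i := by
      have := Nat.find_min hex (m := i) (by omega)
      push_neg at this; exact this
    rw [hi] at hj₀
    exact mem_iUnion.2 ⟨i, ⟨hj₀, hlt⟩⟩
  have hmeasle : volume.restrict (Ioo (0:ℝ) ε) ≤
      Measure.sum (fun j => volume.restrict (Ico (r (j+1)) (r j))) := by
    refine Measure.le_iff.2 fun A hA => ?_
    rw [Measure.sum_apply _ hA]
    simp only [Measure.restrict_apply hA]
    calc volume (A ∩ Ioo 0 ε) ≤ volume (A ∩ ⋃ j, Ico (r (j+1)) (r j)) :=
      measure_mono (inter_subset_inter_right A hcover)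
    _ = volume (⋃ j, A ∩ Ico (r (j+1)) (r j)) := by rw [inter_iUnion]
    _ ≤ ∑' j, volume (A ∩ Ico (r (j+1)) (r j)) := measure_iUnion_le _
  set f₀ : ℝ → ENNReal := fun s => ENNReal.ofReal (1/ρ s) with hf₀
  have htail : ∫⁻ s in Ico ε 1, f₀ s ≠ ⊤ := by
    have h1 : ∫⁻ s in Ico ε 1, f₀ s ≤ ∫⁻ _ in Ico ε 1, ENNReal.ofReal (1/ρ ε) := by
      refine setLIntegral_mono measurable_const fun s hs => ?_
      refine ENNReal.ofReal_le_ofReal (one_div_le_one_div_of_le hρε ?_)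
      exact hmono ⟨hε0.le, hε1⟩ ⟨le_trans hε0.le hs.1, hs.2⟩ hs.1
    rw [setLIntegral_const] at h1
    refine ne_top_of_le_ne_top ?_ h1
    rw [Real.volume_Ico]
    exact ENNReal.mul_ne_top ENNReal.ofReal_ne_top ENNReal.ofReal_ne_top
  have hsplit : volume.restrict (Ioo (0:ℝ) 1) ≤
      volume.restrict (Ioo 0 ε) + volume.restrict (Ico ε 1) := by
    refine Measure.le_iff.2 fun A hA => ?_
    simp only [Measure.add_apply, Measure.restrict_apply hA]
    have hsub : A ∩ Ioo 0 1 ⊆ (A ∩ Ioo 0 ε) ∪ (A ∩ Ico ε 1) := by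
      intro z hz
      by_cases hzε : z < ε
      · exact Or.inl ⟨hz.1, hz.2.1, hzε⟩
      · exact Or.inr ⟨hz.1, le_of_not_gt hzε, hz.2.2⟩
    exact le_trans (measure_mono hsub) (measure_union_le _ _)
  have hlow : ∫⁻ s in Ioo (0:ℝ) ε, f₀ s = ⊤ := by
    by_contra hne
    have h1 : ∫⁻ s in Ioo (0:ℝ) 1, f₀ s ≤
        (∫⁻ s in Ioo 0 ε, f₀ s) + ∫⁻ s in Ico ε 1, f₀ s := by
      calc ∫⁻ s in Ioo 0 1, f₀ s
          ≤ ∫⁻ s, f₀ s ∂(volume.restrict (Ioo 0 ε) + volume.restrict (Ico ε 1)) :=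
        lintegral_mono' hsplit le_rfl
      _ = _ := lintegral_add_measure _ _ _
    rw [htop] at h1
    have h2 : (∫⁻ s in Ioo (0:ℝ) ε, f₀ s) + ∫⁻ s in Ico ε 1, f₀ s < ⊤ :=
      ENNReal.add_lt_top.2 ⟨lt_top_iff_ne_top.2 hne, lt_top_iff_ne_top.2 htail⟩
    exact absurd (lt_of_le_of_lt h1 h2) (lt_irrefl _)
  have hsumtop : ∑' j, ∫⁻ s in Ico (r (j+1)) (r j), f₀ s = ⊤ := by
    have h1 := lintegral_mono' (μ := volume.restrict (Ioo (0:ℝ) ε)) hmeasle (le_refl f₀)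
    rw [lintegral_sum_measure, hlow] at h1
    exact top_le_iff.1 h1
  set b : ℕ → ℝ := fun j => (1/ρ (r (j+1))) * (r j - r (j+1)) with hbdef
  have hbnn : ∀ j, 0 ≤ b j := fun j => by
    have := hρrpos (j+1); have := hdec j
    apply mul_nonneg (by positivity) (by linarith)
  have hterm : ∀ j, ∫⁻ s in Ico (r (j+1)) (r j), f₀ s ≤ ENNReal.ofReal (b j) := by
    intro j
    have h1 : ∫⁻ s in Ico (r (j+1)) (r j), f₀ s ≤
        ∫⁻ _ in Ico (r (j+1)) (r j), ENNReal.ofReal (1/ρ (r (j+1))) := by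
      refine setLIntegral_mono measurable_const fun s hs => ?_
      refine ENNReal.ofReal_le_ofReal (one_div_le_one_div_of_le (hρrpos (j+1)) ?_)
      refine hmono ⟨(hrpos (j+1)).le, lt_of_le_of_lt (hrε (j+1)) hε1⟩
        ⟨le_trans (hrpos (j+1)).le hs.1, lt_of_lt_of_le hs.2 (le_of_lt (lt_of_le_of_lt (hrε j) hε1))⟩
        hs.1
    rw [setLIntegral_const, Real.volume_Ico] at h1
    refine le_trans h1 (le_of_eq ?_)
    rw [← ENNReal.ofReal_mul (one_div_nonneg.2 (hρrpos (j+1)).le)]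
  have hbtop : ∑' j, ENNReal.ofReal (b j) = ⊤ :=
    top_le_iff.1 (hsumtop ▸ ENNReal.tsum_le_tsum hterm)
  have hN : ∃ N, 4*M < ∑ j ∈ Finset.range N, b j := by
    by_contra hc; push_neg at hc
    have h1 : ∑' j, ENNReal.ofReal (b j) ≤ ENNReal.ofReal (4*M) := by
      rw [ENNReal.tsum_eq_iSup_nat]
      refine iSup_le fun N => ?_
      rw [← ENNReal.ofReal_sum_of_nonneg (fun i _ => hbnn i)]
      exact ENNReal.ofReal_le_ofReal (hc N)
    rw [hbtop] at h1
    exact ENNReal.ofReal_ne_top (top_le_iff.1 h1)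
  obtain ⟨N, hN⟩ := hN
  refine ⟨N, r, hr0, hrpos, hdec, hrε, hρrpos, ?_⟩
  have hterm2 : ∀ j, b j / 4 ≤ (r j ^ 2 - r (j+1) ^ 2) / (2 * r j * ρ (r j)) := by
    intro j
    have h1 : 0 < ρ (r j) := hρrpos j
    have h2 : 0 < r j := hrpos j
    have h3 := hdec j
    have h4 := hrpos (j+1)
    have h5 : ρ (r (j+1)) = ρ (r j)/2 := hhalf j
    rw [hbdef]
    simp only []
    rw [h5, div_le_div_iff₀ (by norm_num) (by positivity)]
    have hρne : (ρ (r j)) ≠ 0 := ne_of_gt h1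
    field_simp
    nlinarith [mul_pos (mul_pos h4 (sub_pos.2 h3)) h1, mul_pos h4 (sub_pos.2 h3)]
  calc M < (∑ j ∈ Finset.range N, b j) / 4 := by linarith
  _ = ∑ j ∈ Finset.range N, b j / 4 := Finset.sum_div _ _ _
  _ ≤ _ := Finset.sum_le_sum fun j _ => hterm2 j

end OsgoodSeq
section Osgood

/-- Barrier case of the Osgood lemma: if `ρ` vanishes at some positive level,
the solution cannot cross that level. -/
lemma osgood_barrier {ρ : ℝ → ℝ} (hρ : OsgoodModulus ρ) {ε' : ℝ} (hε'0 : 0 < ε') (hε'1 : ε' < 1)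
    (hρε' : ρ ε' = 0) (a b : ℝ) (φ m c : ℝ → ℝ) (hab : a ≤ b)
    (hφc : ContinuousOn φ (Icc a b)) (hφ0 : ∀ u ∈ Icc a b, 0 ≤ φ u)
    (hineq : ∀ w u, a ≤ w → w ≤ u → u ≤ b → φ u ^ 2 ≤ φ w ^ 2 + ∫ v in w..u, m v)
    (hm : ∀ᵐ v ∂(volume.restrict (Ioo a b)), φ v < 1 → |m v| ≤ 2 * c v * (φ v * ρ (φ v)))
    (hφa : φ a ≤ ε'/2) : ∀ u ∈ Icc a b, φ u ≤ ε' := by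
  intro u hu
  by_contra hcon
  push_neg at hcon
  set S := Icc a b ∩ φ ⁻¹' (Ici ε') with hS
  have hSne : S.Nonempty := ⟨u, hu, hcon.le⟩
  have hScl : IsClosed S := hφc.preimage_isClosed_of_isClosed isClosed_Icc isClosed_Ici
  have hSbdd : BddBelow S := ⟨a, fun z hz => hz.1.1⟩
  set τ := sInf S with hτ
  have hτS : τ ∈ S := hScl.csInf_mem hSne hSbdd
  have hτab : τ ∈ Icc a b := hτS.1
  have hφτ : ε' ≤ φ τ := hτS.2
  have hless : ∀ z ∈ Ico a τ, φ z < ε' := by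
    intro z hz
    by_contra h
    push_neg at h
    have hzS : z ∈ S := ⟨⟨hz.1, le_trans hz.2.le hτab.2⟩, h⟩
    have := csInf_le hSbdd hzS
    rw [← hτ] at this
    linarith [hz.2]
  have key := hineq a τ le_rfl hτab.1 hτab.2
  have hint : ∫ v in a..τ, m v ≤ 0 := by
    rw [intervalIntegral.integral_of_le hτab.1, integral_Ioc_eq_integral_Ioo]
    refine integral_nonpos_of_ae ?_
    have hsub : Ioo a τ ⊆ Ioo a b := Ioo_subset_Ioo le_rfl hτab.2
    have hae := ae_restrict_of_ae_restrict_of_subset hsub hm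
    filter_upwards [hae, ae_restrict_mem measurableSet_Ioo] with v hv hvmem
    have hvab : v ∈ Icc a b := ⟨hvmem.1.le, le_trans hvmem.2.le hτab.2⟩
    have h1 : φ v < ε' := hless v ⟨hvmem.1.le, hvmem.2⟩
    have h2 := hv (lt_trans h1 hε'1)
    have hρ0 : ρ (φ v) = 0 := by
      have hle : ρ (φ v) ≤ ρ ε' :=
        hρ.2.1 ⟨hφ0 v hvab, lt_trans h1 hε'1⟩ ⟨hε'0.le, hε'1⟩ h1.le
      have := hρ.2.2.2.1 (φ v)
      linarith [hρε' ▸ hle]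
    have : |m v| ≤ 0 := by rw [hρ0] at h2; simpa using h2
    calc m v ≤ |m v| := le_abs_self _
    _ ≤ 0 := this
  have h1 : ε'^2 ≤ φ τ^2 := pow_le_pow_left₀ hε'0.le hφτ 2
  have h2 : φ a^2 ≤ (ε'/2)^2 := pow_le_pow_left₀ (hφ0 a ⟨le_rfl, hab⟩) hφa 2
  nlinarith

/-- The quantitative Osgood lemma, forward in time. -/
lemma osgood_forward {ρ : ℝ → ℝ} (hρ : OsgoodModulus ρ) {ε : ℝ} (M : ℝ)
    (hε0 : 0 < ε) (hε1 : ε < 1) :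
    ∃ δ : ℝ, 0 < δ ∧ δ < ε ∧ ∀ (a b : ℝ) (φ m c : ℝ → ℝ), a ≤ b →
      ContinuousOn φ (Icc a b) → (∀ u ∈ Icc a b, 0 ≤ φ u) →
      (∀ v, 0 ≤ c v) → IntervalIntegrable c volume a b → (∫ v in a..b, c v) ≤ M →
      IntervalIntegrable m volume a b →
      (∀ w u, a ≤ w → w ≤ u → u ≤ b → φ u ^ 2 ≤ φ w ^ 2 + ∫ v in w..u, m v) →
      (∀ᵐ v ∂(volume.restrict (Ioo a b)), φ v < 1 → |m v| ≤ 2 * c v * (φ v * ρ (φ v))) →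
      φ a ≤ δ → ∀ u ∈ Icc a b, φ u ≤ ε := by
  rcases eq_or_lt_of_le (hρ.2.2.2.1 ε) with hρε | hρε
  · -- ρ ε = 0 : barrier at ε
    refine ⟨ε/2, by positivity, by linarith, ?_⟩
    intro a b φ m c hab hφc hφ0 _ _ _ _ hineq hm hφa
    exact osgood_barrier hρ hε0 hε1 hρε.symm a b φ m c hab hφc hφ0 hineq hm hφa
  rcases osgood_seq hρ hε0 hε1 hρε M with ⟨ε', hε'0, hε'ε, hρ0⟩ |
    ⟨N, r, hr0, hrpos, hdec, hrε, hρrpos, hsum⟩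
  · -- barrier at ε'
    refine ⟨ε'/2, by positivity, by linarith, ?_⟩
    intro a b φ m c hab hφc hφ0 _ _ _ _ hineq hm hφa
    intro u hu
    refine le_trans ?_ hε'ε
    exact osgood_barrier hρ hε'0 (lt_of_le_of_lt hε'ε hε1) hρ0 a b φ m c hab hφc hφ0
      hineq hm hφa u hu
  · -- main crossing argument
    have hr_anti : Antitone r := antitone_nat_of_succ_le fun j => (hdec j).le
    refine ⟨min (r N) (ε/2), lt_min (hrpos N) (by positivity),
      lt_of_le_of_lt (min_le_right _ _) (by linarith), ?_⟩
    intro a b φ m c hab hφc hφ0 hc0 hc_int hcM hm_int hineq hm hφa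
    intro u hu
    by_contra hcon
    push_neg at hcon
    set A : ℕ → ℝ := fun j => (r j ^ 2 - r (j+1) ^ 2) / (2 * r j * ρ (r j)) with hA
    have hmIoc : IntegrableOn m (Ioc a b) :=
      (intervalIntegrable_iff_integrableOn_Ioc_of_le hab).1 hm_int
    have hcIoc : IntegrableOn c (Ioc a b) :=
      (intervalIntegrable_iff_integrableOn_Ioc_of_le hab).1 hc_int
    have claim : ∀ j, j ≤ N → ∃ τ, τ ∈ Icc a b ∧ r j ≤ φ τ ∧
        ∑ i ∈ Finset.range j, A i ≤ ∫ v in τ..b, c v := by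
      intro j
      induction j with
      | zero =>
        intro _
        refine ⟨u, hu, by rw [hr0]; exact hcon.le, ?_⟩
        simp only [Finset.range_zero, Finset.sum_empty]
        exact intervalIntegral.integral_nonneg hu.2 fun z _ => hc0 z
      | succ j ih =>
        intro hjN
        obtain ⟨τ, hτab, hφτ, hbudget⟩ := ih (by omega)
        set Sα := Icc a τ ∩ φ ⁻¹' (Iic (r (j+1))) with hSαdef
        have hφc' : ContinuousOn φ (Icc a τ) := hφc.mono (Icc_subset_Icc le_rfl hτab.2)
        have hSαne : Sα.Nonempty := by
          refine ⟨a, ⟨le_rfl, hτab.1⟩, ?_⟩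
          show φ a ≤ r (j+1)
          exact le_trans hφa (le_trans (min_le_left _ _) (hr_anti (by omega)))
        have hSαcl : IsClosed Sα := hφc'.preimage_isClosed_of_isClosed isClosed_Icc isClosed_Iic
        have hSαcomp : IsCompact Sα := isCompact_Icc.of_isClosed_subset hSαcl inter_subset_left
        set α := sSup Sα with hαdef
        have hαS : α ∈ Sα := hSαcomp.sSup_mem hSαne
        have hαaτ : α ∈ Icc a τ := hαS.1
        have hφα_le : φ α ≤ r (j+1) := hαS.2
        have hαmem : α ∈ Icc a b := ⟨hαaτ.1, le_trans hαaτ.2 hτab.2⟩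
        set Sβ := Icc α τ ∩ φ ⁻¹' (Ici (r j)) with hSβdef
        have hSβne : Sβ.Nonempty := ⟨τ, ⟨hαaτ.2, le_rfl⟩, hφτ⟩
        have hφc'' : ContinuousOn φ (Icc α τ) :=
          hφc.mono (Icc_subset_Icc hαmem.1 hτab.2)
        have hSβcl : IsClosed Sβ := hφc''.preimage_isClosed_of_isClosed isClosed_Icc isClosed_Ici
        have hSβcomp : IsCompact Sβ := isCompact_Icc.of_isClosed_subset hSβcl inter_subset_left
        set β := sInf Sβ with hβdef
        have hβS : β ∈ Sβ := hSβcomp.sInf_mem hSβne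
        have hβατ : β ∈ Icc α τ := hβS.1
        have hφβ : r j ≤ φ β := hβS.2
        have hβb : β ≤ b := le_trans hβατ.2 hτab.2
        have hαβ : α < β := by
          rcases eq_or_lt_of_le hβατ.1 with h | h
          · exfalso
            rw [← h] at hφβ
            have := hdec j
            linarith
          · exact h
        have hmid : ∀ z ∈ Ioo α β, r (j+1) < φ z ∧ φ z < r j := by
          intro z hz
          constructor
          · by_contra hzc
            push_neg at hzc
            have hzS : z ∈ Sα := ⟨⟨le_trans hαmem.1 hz.1.le,
              le_trans hz.2.le hβατ.2⟩, hzc⟩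
            have := le_csSup hSαcomp.bddAbove hzS
            rw [← hαdef] at this
            linarith [hz.1]
          · by_contra hzc
            push_neg at hzc
            have hzS : z ∈ Sβ := ⟨⟨hz.1.le, le_trans hz.2.le hβατ.2⟩, hzc⟩
            have := csInf_le hSβcomp.bddBelow hzS
            rw [← hβdef] at this
            linarith [hz.2]
        have hφα_ge : r (j+1) ≤ φ α := by
          have hclosure : α ∈ closure (Ioo α β) := by
            rw [closure_Ioo (ne_of_lt hαβ)]
            exact ⟨le_rfl, hαβ.le⟩
          haveI hne : (nhdsWithin α (Ioo α β)).NeBot :=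
            mem_closure_iff_nhdsWithin_neBot.1 hclosure
          have hsub : Ioo α β ⊆ Icc a b := fun z hz =>
            ⟨le_trans hαmem.1 hz.1.le, le_trans hz.2.le hβb⟩
          have htend : Filter.Tendsto φ (nhdsWithin α (Ioo α β)) (nhds (φ α)) :=
            (hφc α hαmem).mono_left (nhdsWithin_mono α hsub)
          refine ge_of_tendsto htend ?_
          filter_upwards [self_mem_nhdsWithin] with z hz
          exact (hmid z hz).1.le
        have hab_sub : Ioo α β ⊆ Ioo a b := Ioo_subset_Ioo hαmem.1 hβb
        have hkey := hineq α β hαmem.1 hαβ.le hβb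
        have hmι : IntegrableOn m (Ioo α β) :=
          hmIoc.mono_set fun z hz => ⟨lt_of_le_of_lt hαmem.1 hz.1, le_trans hz.2.le hβb⟩
        have hcι : IntegrableOn c (Ioo α β) :=
          hcIoc.mono_set fun z hz => ⟨lt_of_le_of_lt hαmem.1 hz.1, le_trans hz.2.le hβb⟩
        have hint1 : ∫ v in α..β, m v ≤ ∫ v in Ioo α β, (2 * (r j * ρ (r j))) * c v := by
          rw [intervalIntegral.integral_of_le hαβ.le, integral_Ioc_eq_integral_Ioo]
          refine integral_mono_ae hmι (hcι.const_mul _) ?_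
          have hae := ae_restrict_of_ae_restrict_of_subset hab_sub hm
          filter_upwards [hae, ae_restrict_mem measurableSet_Ioo] with v hv hvmem
          have h1 := hmid v hvmem
          have hv1 : φ v < 1 := lt_of_lt_of_le h1.2 (le_trans (hrε j) hε1.le)
          have h2 := hv hv1
          have hφv0 : 0 ≤ φ v := le_trans (hrpos (j+1)).le h1.1.le
          have hρmono : ρ (φ v) ≤ ρ (r j) :=
            hρ.2.1 ⟨hφv0, hv1⟩ ⟨(hrpos j).le, lt_of_le_of_lt (hrε j) hε1⟩ h1.2.le
          calc m v ≤ |m v| := le_abs_self _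
          _ ≤ 2 * c v * (φ v * ρ (φ v)) := h2
          _ ≤ 2 * c v * (r j * ρ (r j)) := by
              apply mul_le_mul_of_nonneg_left _ (by linarith [hc0 v])
              exact mul_le_mul h1.2.le hρmono (hρ.2.2.2.1 _) (hrpos j).le
          _ = (2 * (r j * ρ (r j))) * c v := by ring
        have hint2 : ∫ v in Ioo α β, (2 * (r j * ρ (r j))) * c v
            = (2 * (r j * ρ (r j))) * ∫ v in Ioo α β, c v := MeasureTheory.integral_const_mul _ _
        have hAj : A j ≤ ∫ v in Ioo α β, c v := by
          have hφβ2 : r j ^ 2 ≤ φ β ^ 2 := pow_le_pow_left₀ (hrpos j).le hφβ 2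
          have hφα2 : φ α ^ 2 ≤ r (j+1) ^ 2 := pow_le_pow_left₀ (hφ0 α hαmem) hφα_le 2
          have h1 : r j ^ 2 - r (j+1) ^ 2 ≤ (2 * (r j * ρ (r j))) * ∫ v in Ioo α β, c v := by
            calc r j ^ 2 - r (j+1) ^ 2 ≤ φ β ^ 2 - φ α ^ 2 := by linarith
            _ ≤ ∫ v in α..β, m v := by linarith [hkey]
            _ ≤ _ := le_trans hint1 (le_of_eq hint2)
          rw [hA]
          simp only []
          rw [div_le_iff₀ (mul_pos (mul_pos two_pos (hrpos j)) (hρrpos j))]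
          nlinarith [h1]
        have hIαβ : IntervalIntegrable c volume α β := hc_int.mono_set (by
          rw [uIcc_of_le hab, uIcc_of_le hαβ.le]
          exact Icc_subset_Icc hαmem.1 hβb)
        have hIβτ : IntervalIntegrable c volume β τ := hc_int.mono_set (by
          rw [uIcc_of_le hab, uIcc_of_le hβατ.2]
          exact Icc_subset_Icc (le_trans hαmem.1 hβατ.1) hτab.2)
        have hIτb : IntervalIntegrable c volume τ b := hc_int.mono_set (by
          rw [uIcc_of_le hab, uIcc_of_le hτab.2]
          exact Icc_subset_Icc hτab.1 le_rfl)
        have hIappa : IntervalIntegrable c volume α τ := hc_int.mono_set (by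
          rw [uIcc_of_le hab, uIcc_of_le (le_trans hαβ.le hβατ.2)]
          exact Icc_subset_Icc hαmem.1 hτab.2)
        have hsplit1 : (∫ v in α..β, c v) + ∫ v in β..τ, c v = ∫ v in α..τ, c v :=
          intervalIntegral.integral_add_adjacent_intervals hIαβ hIβτ
        have hsplit2 : (∫ v in α..τ, c v) + ∫ v in τ..b, c v = ∫ v in α..b, c v :=
          intervalIntegral.integral_add_adjacent_intervals hIappa hIτb
        have hβτ_nonneg : 0 ≤ ∫ v in β..τ, c v :=
          intervalIntegral.integral_nonneg hβατ.2 fun z _ => hc0 z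
        have hIooc : ∫ v in α..β, c v = ∫ v in Ioo α β, c v := by
          rw [intervalIntegral.integral_of_le hαβ.le, integral_Ioc_eq_integral_Ioo]
        refine ⟨α, hαmem, hφα_ge, ?_⟩
        rw [Finset.sum_range_succ]
        have : (∫ v in Ioo α β, c v) + ∫ v in τ..b, c v ≤ ∫ v in α..b, c v := by
          rw [← hsplit2, ← hsplit1, ← hIooc]
          linarith
        linarith [add_le_add hbudget hAj]
    obtain ⟨τ, hτab, _, hbudget⟩ := claim N le_rfl
    have hIaτ : IntervalIntegrable c volume a τ := hc_int.mono_set (by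
      rw [uIcc_of_le hab, uIcc_of_le hτab.1]
      exact Icc_subset_Icc le_rfl hτab.2)
    have hIτb : IntervalIntegrable c volume τ b := hc_int.mono_set (by
      rw [uIcc_of_le hab, uIcc_of_le hτab.2]
      exact Icc_subset_Icc hτab.1 le_rfl)
    have h1 : ∫ v in τ..b, c v ≤ ∫ v in a..b, c v := by
      rw [← intervalIntegral.integral_add_adjacent_intervals hIaτ hIτb]
      have : 0 ≤ ∫ v in a..τ, c v := intervalIntegral.integral_nonneg hτab.1 fun z _ => hc0 z
      linarith
    linarith [le_trans hbudget (le_trans h1 hcM)]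

end Osgood
section Backward

/-- Transfer of a.e. properties under the reflection `v ↦ a + b - v`. -/
lemma ae_reflect {a b : ℝ} {Q : ℝ → Prop}
    (h : ∀ᵐ v ∂(volume.restrict (Ioo a b)), Q v) :
    ∀ᵐ v ∂(volume.restrict (Ioo a b)), Q (a + b - v) := by
  have hTmeas : Measurable (fun v : ℝ => a + b - v) := measurable_const.sub measurable_id
  have hTpre : (fun v : ℝ => a + b - v) ⁻¹' (Ioo a b) = Ioo a b := by
    ext v
    simp only [Set.mem_preimage, Set.mem_Ioo]
    constructor
    · rintro ⟨h1, h2⟩; constructor <;> linarith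
    · rintro ⟨h1, h2⟩; constructor <;> linarith
  have hTvol : MeasurePreserving (fun v : ℝ => a + b - v) volume volume := by
    have h1 : MeasurePreserving (fun v : ℝ => -v) volume volume :=
      Measure.measurePreserving_neg _
    have h2 : MeasurePreserving (fun v : ℝ => (a+b) + v) volume volume :=
      measurePreserving_add_left volume (a+b)
    have h3 := h2.comp h1
    have heq : (fun v : ℝ => a + b - v) = (fun v : ℝ => (a+b) + v) ∘ (fun v : ℝ => -v) := by
      funext v; simp [Function.comp]; ring
    rw [heq]; exact h3
  have h' : volume.restrict (Ioo a b) {v | ¬ Q v} = 0 := ae_iff.1 h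
  obtain ⟨N, hsub, hNmeas, hNnull⟩ := exists_measurable_superset_of_null h'
  rw [ae_iff]
  refine measure_mono_null (fun v hv => hsub hv : {v | ¬ Q (a + b - v)} ⊆
    (fun v : ℝ => a + b - v) ⁻¹' N) ?_
  show (volume.restrict (Ioo a b)) ((fun v : ℝ => a + b - v) ⁻¹' N) = 0
  rw [Measure.restrict_apply (hTmeas hNmeas)]
  have heq2 : (fun v : ℝ => a + b - v) ⁻¹' N ∩ Ioo a b
      = (fun v : ℝ => a + b - v) ⁻¹' (N ∩ Ioo a b) := by
    rw [Set.preimage_inter, hTpre]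
  rw [heq2, hTvol.measure_preimage (hNmeas.inter measurableSet_Ioo).nullMeasurableSet]
  rw [← Measure.restrict_apply hNmeas]
  exact hNnull

/-- The quantitative Osgood lemma, backward in time. -/
lemma osgood_backward {ρ : ℝ → ℝ} (hρ : OsgoodModulus ρ) {ε : ℝ} (M : ℝ)
    (hε0 : 0 < ε) (hε1 : ε < 1) :
    ∃ δ : ℝ, 0 < δ ∧ δ < ε ∧ ∀ (a b : ℝ) (φ m c : ℝ → ℝ), a ≤ b →
      ContinuousOn φ (Icc a b) → (∀ u ∈ Icc a b, 0 ≤ φ u) →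
      (∀ v, 0 ≤ c v) → IntervalIntegrable c volume a b → (∫ v in a..b, c v) ≤ M →
      IntervalIntegrable m volume a b →
      (∀ w u, a ≤ w → w ≤ u → u ≤ b → φ u ^ 2 = φ w ^ 2 + ∫ v in w..u, m v) →
      (∀ᵐ v ∂(volume.restrict (Ioo a b)), φ v < 1 → |m v| ≤ 2 * c v * (φ v * ρ (φ v))) →
      φ b ≤ δ → ∀ u ∈ Icc a b, φ u ≤ ε := by
  obtain ⟨δ, hδ0, hδε, hδ⟩ := osgood_forward hρ M hε0 hε1
  refine ⟨δ, hδ0, hδε, ?_⟩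
  intro a b φ m c hab hφc hφ0 hc0 hc_int hcM hm_int hineq hm hφb u hu
  have hrefl_cont : ContinuousOn (fun v : ℝ => a + b - v) (Icc a b) :=
    (continuous_const.sub continuous_id).continuousOn
  have hmaps : MapsTo (fun v : ℝ => a + b - v) (Icc a b) (Icc a b) := by
    intro v hv
    simp only [Set.mem_Icc] at hv ⊢
    constructor <;> linarith
  have hψc : ContinuousOn (fun v => φ (a + b - v)) (Icc a b) := hφc.comp hrefl_cont hmaps
  have hc'_int : IntervalIntegrable (fun v => c (a + b - v)) volume a b := by
    have h1 := (hc_int.comp_sub_left (a+b)).symm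
    simpa using h1
  have hm'_int : IntervalIntegrable (fun v => -m (a + b - v)) volume a b := by
    have h1 := ((hm_int.comp_sub_left (a+b)).symm).neg
    have h2 : IntervalIntegrable (fun v => -m (a + b - v)) volume ((a+b)-b) ((a+b)-a) := h1
    simpa using h2
  have hψineq : ∀ w u, a ≤ w → w ≤ u → u ≤ b →
      φ (a + b - u) ^ 2 ≤ φ (a + b - w) ^ 2 + ∫ v in w..u, -m (a + b - v) := by
    intro w u haw hwu hub
    have h1 := hineq (a + b - u) (a + b - w) (by linarith) (by linarith) (by linarith)
    have h2 : ∫ v in w..u, -m (a + b - v) = -(∫ v in (a+b-u)..(a+b-w), m v) := by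
      rw [intervalIntegral.integral_neg]
      congr 1
      have h3 := intervalIntegral.integral_comp_sub_left (a := w) (b := u) m (a+b)
      exact h3
    rw [h2]; linarith
  have hψ0 : ∀ u ∈ Icc a b, 0 ≤ φ (a + b - u) := fun z hz => hφ0 _ (hmaps hz)
  have hc'0 : ∀ v, (0:ℝ) ≤ c (a + b - v) := fun v => hc0 _
  have hc'M : (∫ v in a..b, c (a + b - v)) ≤ M := by
    have h1 := intervalIntegral.integral_comp_sub_left (a := a) (b := b) c (a+b)
    simp only [add_sub_cancel_right, add_sub_cancel_left] at h1
    rw [h1]; exact hcM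
  have hm' : ∀ᵐ v ∂(volume.restrict (Ioo a b)), φ (a + b - v) < 1 →
      |(-m (a + b - v))| ≤ 2 * c (a + b - v) * (φ (a + b - v) * ρ (φ (a + b - v))) := by
    have h1 := ae_reflect (a := a) (b := b)
      (Q := fun v => φ v < 1 → |m v| ≤ 2 * c v * (φ v * ρ (φ v))) hm
    filter_upwards [h1] with v hv h2
    rw [abs_neg]
    exact hv h2
  have hψa : φ (a + b - a) ≤ δ := by
    rw [add_sub_cancel_left]; exact hφb
  have hres := hδ a b (fun v => φ (a + b - v)) (fun v => -m (a + b - v))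
    (fun v => c (a + b - v)) hab hψc hψ0 hc'0 hc'_int hc'M hm'_int hψineq hm' hψa
  have hu' : a + b - u ∈ Icc a b := hmaps hu
  have h2 := hres (a + b - u) hu'
  simpa using h2

end Backward
section Stability
variable {n : ℕ}
local notation "E" => EuclideanSpace ℝ (Fin n)

lemma sol_continuousOn {T : ℝ} (hT : 0 < T) (g Y : ℝ → E)
    (hg : IntegrableOn g (Icc 0 T))
    (hYeq : ∀ u ∈ Icc (0:ℝ) T, Y u = Y 0 + ∫ v in (0:ℝ)..u, g v) :
    ContinuousOn Y (Icc 0 T) := by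
  have huI : uIcc (0:ℝ) T = Icc 0 T := uIcc_of_le hT.le
  have h1 : ContinuousOn (fun u => Y 0 + ∫ v in (0:ℝ)..u, g v) (Icc 0 T) :=
    continuousOn_const.add (huI ▸ intervalIntegral.continuousOn_primitive_interval (huI ▸ hg))
  exact h1.congr hYeq

lemma sol_intervalIntegrable {T : ℝ} (g : ℝ → E) (hg : IntegrableOn g (Icc 0 T))
    {p q : ℝ} (hp : p ∈ Icc (0:ℝ) T) (hq : q ∈ Icc (0:ℝ) T) :
    IntervalIntegrable g volume p q :=
  IntegrableOn.intervalIntegrable (hg.mono_set (uIcc_subset_Icc hp hq))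

lemma sol_diff {T : ℝ} (g Y : ℝ → E) (hg : IntegrableOn g (Icc 0 T))
    (hYeq : ∀ u ∈ Icc (0:ℝ) T, Y u = Y 0 + ∫ v in (0:ℝ)..u, g v)
    {w u : ℝ} (hw : w ∈ Icc (0:ℝ) T) (hu : u ∈ Icc (0:ℝ) T) :
    Y u = Y w + ∫ v in w..u, g v := by
  have h0T : (0:ℝ) ∈ Icc (0:ℝ) T := ⟨le_rfl, le_trans hw.1 hw.2⟩
  have hadj := intervalIntegral.integral_add_adjacent_intervals
    (sol_intervalIntegrable g hg h0T hw) (sol_intervalIntegrable g hg hw hu)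
  rw [hYeq u hu, hYeq w hw, ← hadj]
  abel

lemma flow_stability {T : ℝ} (hT : 0 < T)
    {V : ℝ → E → E} {ρ C D : ℝ → ℝ} (hρ : OsgoodModulus ρ)
    (hC : IntegrableOn C (Ioo 0 T)) (hC0 : ∀ t, 0 ≤ C t)
    (hO : OsgoodCond V C ρ T) (hB : BoundCond V D T)
    {X : ℝ → ℝ → E → E} (hX : IsFilippovFlow V T X) :
    ∀ s ∈ Icc (0:ℝ) T, ∀ t ∈ Icc (0:ℝ) T, ∀ ε : ℝ, 0 < ε → ε < 1 →
      ∃ δ : ℝ, 0 < δ ∧ ∀ x y : E, ‖x - y‖ ≤ δ → ‖X s t x - X s t y‖ ≤ ε := by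
  intro s hs t ht ε hε0 hε1
  have hab : min s t ≤ max s t := min_le_max
  have ha0 : 0 ≤ min s t := le_min hs.1 ht.1
  have hbT : max s t ≤ T := max_le hs.2 ht.2
  have hIcc_sub : Icc (min s t) (max s t) ⊆ Icc 0 T := Icc_subset_Icc ha0 hbT
  have hIoo_sub : Ioo (min s t) (max s t) ⊆ Ioo 0 T := Ioo_subset_Ioo ha0 hbT
  have hC_int : IntervalIntegrable C volume (min s t) (max s t) := by
    apply IntegrableOn.intervalIntegrable
    rw [uIcc_of_le hab, integrableOn_Icc_iff_integrableOn_Ioo]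
    exact hC.mono_set hIoo_sub
  obtain ⟨δ₁, hδ₁0, hδ₁ε, hfwd⟩ :=
    osgood_forward hρ (∫ v in (min s t)..(max s t), C v) hε0 hε1
  obtain ⟨δ₂, hδ₂0, hδ₂ε, hbwd⟩ :=
    osgood_backward hρ (∫ v in (min s t)..(max s t), C v) hε0 hε1
  refine ⟨min δ₁ δ₂, lt_min hδ₁0 hδ₂0, ?_⟩
  intro x y hxy
  obtain ⟨hXs, hsolx, -⟩ := hX s hs x
  obtain ⟨hYs, hsoly, -⟩ := hX s hs y
  obtain ⟨gx, hgx_int, hgx_eq, hgx_mem⟩ := hsolx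
  obtain ⟨gy, hgy_int, hgy_eq, hgy_mem⟩ := hsoly
  have hk_int : IntegrableOn (fun v => gx v - gy v) (Icc 0 T) := hgx_int.sub hgy_int
  have hYdiff : ∀ w ∈ Icc (0:ℝ) T, ∀ u ∈ Icc (0:ℝ) T,
      X s u x - X s u y = (X s w x - X s w y) + ∫ v in w..u, (gx v - gy v) := by
    intro w hw u hu
    have e1 := sol_diff gx (fun u => X s u x) hgx_int hgx_eq hw hu
    have e2 := sol_diff gy (fun u => X s u y) hgy_int hgy_eq hw hu
    have e3 : ∫ v in w..u, (gx v - gy v) = (∫ v in w..u, gx v) - ∫ v in w..u, gy v :=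
      intervalIntegral.integral_sub (sol_intervalIntegrable gx hgx_int hw hu)
        (sol_intervalIntegrable gy hgy_int hw hu)
    rw [e1, e2, e3]
    abel
  -- continuity of the difference
  have hcx : ContinuousOn (fun u => X s u x) (Icc 0 T) :=
    sol_continuousOn hT gx _ hgx_int hgx_eq
  have hcy : ContinuousOn (fun u => X s u y) (Icc 0 T) :=
    sol_continuousOn hT gy _ hgy_int hgy_eq
  have hΔc : ContinuousOn (fun u => X s u x - X s u y) (Icc 0 T) := hcx.sub hcy
  have hφc : ContinuousOn (fun u => ‖X s u x - X s u y‖) (Icc (min s t) (max s t)) :=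
    (hΔc.mono hIcc_sub).norm
  have hφ0 : ∀ u ∈ Icc (min s t) (max s t), (0:ℝ) ≤ ‖X s u x - X s u y‖ :=
    fun u _ => norm_nonneg _
  -- integrability of m
  obtain ⟨K, hK⟩ : ∃ K, ∀ v ∈ Icc (0:ℝ) T, ‖X s v x - X s v y‖ ≤ K :=
    isCompact_Icc.exists_bound_of_continuousOn hΔc
  have hm_int : IntervalIntegrable
      (fun v => 2 * (inner ℝ (gx v - gy v) (X s v x - X s v y) : ℝ)) volume
      (min s t) (max s t) := by
    apply IntegrableOn.intervalIntegrable
    rw [uIcc_of_le hab]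
    have hkI : IntegrableOn (fun v => gx v - gy v) (Icc (min s t) (max s t)) :=
      hk_int.mono_set hIcc_sub
    have hΔasm : AEStronglyMeasurable (fun v => X s v x - X s v y)
        (volume.restrict (Icc (min s t) (max s t))) :=
      (hΔc.mono hIcc_sub).aestronglyMeasurable measurableSet_Icc
    refine Integrable.const_mul ?_ 2
    refine Integrable.mono' (hkI.norm.mul_const K) (hkI.aestronglyMeasurable.inner hΔasm) ?_
    filter_upwards [ae_restrict_mem measurableSet_Icc] with v hv
    calc ‖(inner ℝ (gx v - gy v) (X s v x - X s v y) : ℝ)‖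
        ≤ ‖gx v - gy v‖ * ‖X s v x - X s v y‖ := norm_inner_le_norm _ _
    _ ≤ ‖gx v - gy v‖ * K :=
        mul_le_mul_of_nonneg_left (hK v (hIcc_sub hv)) (norm_nonneg _)
  -- the energy identity
  have hiden : ∀ w u : ℝ, min s t ≤ w → w ≤ u → u ≤ max s t →
      ‖X s u x - X s u y‖ ^ 2 = ‖X s w x - X s w y‖ ^ 2 +
        ∫ v in w..u, 2 * (inner ℝ (gx v - gy v) (X s v x - X s v y) : ℝ) := by
    intro w u haw hwu hub
    have hw : w ∈ Icc (0:ℝ) T := hIcc_sub ⟨haw, le_trans hwu hub⟩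
    have hu' : u ∈ Icc (0:ℝ) T := hIcc_sub ⟨le_trans haw hwu, hub⟩
    have hkwu : IntegrableOn (fun v => gx v - gy v) (Icc w u) :=
      hk_int.mono_set (Icc_subset_Icc hw.1 hu'.2)
    have h1 := sq_dist_identity hwu hkwu (X s w x - X s w y)
    rw [← hYdiff w hw u hu'] at h1
    have h2 : ∫ v in w..u,
        2 * (inner ℝ (gx v - gy v) ((X s w x - X s w y) + ∫ z in w..v, (gx z - gy z)) : ℝ)
        = ∫ v in w..u, 2 * (inner ℝ (gx v - gy v) (X s v x - X s v y) : ℝ) := by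
      refine intervalIntegral.integral_congr fun v hv => ?_
      rw [uIcc_of_le hwu] at hv
      have hv' : v ∈ Icc (0:ℝ) T := ⟨le_trans hw.1 hv.1, le_trans hv.2 hu'.2⟩
      rw [← hYdiff w hw v hv']
    rw [h2] at h1
    exact h1
  -- the a.e. bound
  have hmae : ∀ᵐ v ∂(volume.restrict (Ioo (min s t) (max s t))),
      ‖X s v x - X s v y‖ < 1 →
      |2 * (inner ℝ (gx v - gy v) (X s v x - X s v y) : ℝ)| ≤
        2 * C v * (‖X s v x - X s v y‖ * ρ ‖X s v x - X s v y‖) := by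
    have h1 := ae_restrict_of_ae_restrict_of_subset hIoo_sub hgx_mem
    have h2 := ae_restrict_of_ae_restrict_of_subset hIoo_sub hgy_mem
    filter_upwards [h1, h2, ae_restrict_mem measurableSet_Ioo] with v hv1 hv2 hvmem hlt
    have hvT : v ∈ Ioo (0:ℝ) T := hIoo_sub hvmem
    have hpair := pairing ⟨hρ.1, hρ.2.1, hρ.2.2.1, hρ.2.2.2.1, hρ.2.2.2.2⟩ hC0 hO hB hvT
      (X s v x) (X s v y) (gx v) (gy v) hlt hv1 hv2
    rw [abs_mul, abs_two]
    calc 2 * |(inner ℝ (gx v - gy v) (X s v x - X s v y) : ℝ)|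
        ≤ 2 * (C v * (‖X s v x - X s v y‖ * ρ ‖X s v x - X s v y‖)) := by linarith
    _ = 2 * C v * (‖X s v x - X s v y‖ * ρ ‖X s v x - X s v y‖) := by ring
  -- conclude, splitting on the order of s and t
  rcases le_total s t with hst | hts
  · have ha : min s t = s := min_eq_left hst
    have hb : max s t = t := max_eq_right hst
    have hφa : ‖X s (min s t) x - X s (min s t) y‖ ≤ δ₁ := by
      rw [ha, hXs, hYs]
      exact le_trans hxy (min_le_left _ _)
    have := hfwd (min s t) (max s t) (fun u => ‖X s u x - X s u y‖)
      (fun v => 2 * (inner ℝ (gx v - gy v) (X s v x - X s v y) : ℝ)) C hab hφc hφ0 hC0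
      hC_int le_rfl hm_int (fun w u h1 h2 h3 => le_of_eq (hiden w u h1 h2 h3)) hmae hφa
    have := this t ⟨by rw [ha]; exact hst, by rw [hb]⟩
    exact this
  · have ha : min s t = t := min_eq_right hts
    have hb : max s t = s := max_eq_left hts
    have hφb : ‖X s (max s t) x - X s (max s t) y‖ ≤ δ₂ := by
      rw [hb, hXs, hYs]
      exact le_trans hxy (min_le_right _ _)
    have := hbwd (min s t) (max s t) (fun u => ‖X s u x - X s u y‖)
      (fun v => 2 * (inner ℝ (gx v - gy v) (X s v x - X s v y) : ℝ)) C hab hφc hφ0 hC0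
      hC_int le_rfl hm_int hiden hmae hφb
    have := this t ⟨by rw [ha], by rw [hb]; exact hts⟩
    exact this

end Stability

/-- Under (O) and (B), for each pair of times `s, t ∈ [0,T]` the flow map
`x ↦ X(s,t,x)` is a homeomorphism of `ℝ^d`, with inverse `x ↦ X(t,s,x)`. -/
theorem filippov_flow_homeomorph {n : ℕ} {T : ℝ} (hT : 0 < T)
    {V : ℝ → EuclideanSpace ℝ (Fin n) → EuclideanSpace ℝ (Fin n)}
    {ρ C D : ℝ → ℝ} (hρ : OsgoodModulus ρ)
    (hC : IntegrableOn C (Ioo 0 T)) (hC0 : ∀ t, 0 ≤ C t)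
    (hO : OsgoodCond V C ρ T) (hB : BoundCond V D T)
    {X : ℝ → ℝ → EuclideanSpace ℝ (Fin n) → EuclideanSpace ℝ (Fin n)}
    (hX : IsFilippovFlow V T X) :
    ∀ s ∈ Icc (0:ℝ) T, ∀ t ∈ Icc (0:ℝ) T,
      ∃ e : EuclideanSpace ℝ (Fin n) ≃ₜ EuclideanSpace ℝ (Fin n),
        (∀ x, e x = X s t x) ∧ (∀ x, e.symm x = X t s x) := by
  have hinv : ∀ s ∈ Icc (0:ℝ) T, ∀ t ∈ Icc (0:ℝ) T, ∀ x, X t s (X s t x) = x := by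
    intro s hs t ht x
    obtain ⟨hXss, hsol, -⟩ := hX s hs x
    obtain ⟨-, -, huniq⟩ := hX t ht (X s t x)
    have h1 := huniq (fun u => X s u x) hsol rfl s hs
    rw [hXss] at h1
    exact h1.symm
  have hcont : ∀ s ∈ Icc (0:ℝ) T, ∀ t ∈ Icc (0:ℝ) T,
      Continuous (fun x : EuclideanSpace ℝ (Fin n) => X s t x) := by
    intro s hs t ht
    rw [Metric.continuous_iff]
    intro z ε hε
    have hε'0 : 0 < min (ε/2) 2⁻¹ := lt_min (by linarith) (by norm_num)
    have hε'1 : min (ε/2) (2⁻¹ : ℝ) < 1 := lt_of_le_of_lt (min_le_right _ _) (by norm_num)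
    obtain ⟨δ, hδ0, hδ⟩ := flow_stability hT hρ hC hC0 hO hB hX s hs t ht _ hε'0 hε'1
    refine ⟨δ, hδ0, fun w hw => ?_⟩
    have h1 : ‖X s t w - X s t z‖ ≤ min (ε/2) 2⁻¹ := hδ w z (by
      rw [← dist_eq_norm]; exact hw.le)
    rw [dist_eq_norm]
    calc ‖X s t w - X s t z‖ ≤ min (ε/2) 2⁻¹ := h1
    _ ≤ ε/2 := min_le_left _ _
    _ < ε := by linarith
  intro s hs t ht
  exact ⟨⟨⟨fun x => X s t x, fun x => X t s x, fun x => hinv s hs t ht x,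
    fun x => hinv t ht s hs x⟩, hcont s hs t ht, hcont t ht s hs⟩,
    fun _ => rfl, fun _ => rfl⟩
end
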